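/- arXiv:2101.00867 — 7 statements merged into one kernel-verified Lean document; each statement's English description precedes it below -/
import Mathlib

section
/- A Steiner triple system of order 7 admits no zero-sum flow; that is, the only real-valued function f on the blocks of an STS(7) such that for every point x the sum of f over all blocks containing x is zero, is the zero function. -/
/-- An STS(7) admits no (nonzero) zero-sum flow: any real function on the
blocks whose sum over the blocks through each point is zero must be identically zero. -/
theorem sts7_no_zero_sum_flow {α : Type*} [DecidableEq α]
    (X : Finset α) (B : Finset (Finset α))
    (hX : X.card = 7)
    (hblocks : ∀ b ∈ B, b ⊆ X ∧ b.card = 3)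
    (hpairs : ∀ p ⊆ X, p.card = 2 → ∃! b, b ∈ B ∧ p ⊆ b)
    (f : Finset α → ℝ)
    (hflow : ∀ x ∈ X, ∑ b ∈ B.filter (fun b => x ∈ b), f b = 0) :
    ∀ b ∈ B, f b = 0 := by
  classical
  -- unique block through two distinct points of X
  have hpair2 : ∀ x y : α, x ∈ X → y ∈ X → x ≠ y →
      ∃! b, b ∈ B ∧ x ∈ b ∧ y ∈ b := by
    intro x y hx hy hxy
    have hsub : ({x, y} : Finset α) ⊆ X := by
      intro z hz; simp only [Finset.mem_insert, Finset.mem_singleton] at hz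
      rcases hz with rfl | rfl <;> assumption
    have hcard : ({x, y} : Finset α).card = 2 := by
      rw [Finset.card_insert_of_notMem (by simp [hxy]), Finset.card_singleton]
    obtain ⟨b, ⟨hbB, hb⟩, huniq⟩ := hpairs {x, y} hsub hcard
    refine ⟨b, ⟨hbB, hb (by simp), hb (by simp)⟩, ?_⟩
    rintro c ⟨hcB, hxc, hyc⟩
    refine huniq c ⟨hcB, ?_⟩
    intro z hz; simp only [Finset.mem_insert, Finset.mem_singleton] at hz
    rcases hz with rfl | rfl <;> assumption
  -- exactly three blocks through each point
  have hthree : ∀ x ∈ X, (B.filter (fun b => x ∈ b)).card = 3 := by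
    intro x hx
    set Bx := B.filter (fun b => x ∈ b) with hBx
    have hcover : Bx.biUnion (fun b => b.erase x) = X.erase x := by
      ext y
      simp only [Finset.mem_biUnion, Finset.mem_erase, hBx, Finset.mem_filter]
      constructor
      · rintro ⟨b, ⟨hbB, _⟩, hyx, hyb⟩
        exact ⟨hyx, (hblocks b hbB).1 hyb⟩
      · rintro ⟨hyx, hyX⟩
        obtain ⟨b, ⟨hbB, hxb, hyb⟩, _⟩ := hpair2 x y hx hyX (Ne.symm hyx)
        exact ⟨b, ⟨hbB, hxb⟩, hyx, hyb⟩
    have hdisj : ∀ b ∈ Bx, ∀ c ∈ Bx, b ≠ c → Disjoint (b.erase x) (c.erase x) := by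
      intro b hb c hc hbc
      rw [Finset.disjoint_left]
      intro y hyb hyc
      rw [Finset.mem_erase] at hyb hyc
      rw [hBx, Finset.mem_filter] at hb hc
      obtain ⟨u, _, hu⟩ := hpair2 x y hx ((hblocks b hb.1).1 hyb.2) (Ne.symm hyb.1)
      exact hbc ((hu b ⟨hb.1, hb.2, hyb.2⟩).trans (hu c ⟨hc.1, hc.2, hyc.2⟩).symm)
    have hsum : ∑ b ∈ Bx, (b.erase x).card = 6 := by
      rw [← Finset.card_biUnion hdisj, hcover, Finset.card_erase_of_mem hx, hX]
    have hsum2 : ∑ b ∈ Bx, (b.erase x).card = 2 * Bx.card := by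
      rw [Finset.sum_congr rfl (fun b hb => ?_), Finset.sum_const, smul_eq_mul, mul_comm]
      rw [hBx, Finset.mem_filter] at hb
      rw [Finset.card_erase_of_mem hb.2, (hblocks b hb.1).2]
    omega
  -- any two distinct blocks intersect in exactly one point
  have hmeet1 : ∀ b ∈ B, ∀ c ∈ B, b ≠ c → (b ∩ c).card = 1 := by
    intro b hb c hc hbc
    have hle : (b ∩ c).card ≤ 1 := by
      by_contra h
      push_neg at h
      obtain ⟨u, hu, v, hv, huv⟩ := Finset.one_lt_card.mp h
      rw [Finset.mem_inter] at hu hv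
      obtain ⟨w, _, hw⟩ := hpair2 u v ((hblocks b hb).1 hu.1) ((hblocks b hb).1 hv.1) huv
      exact hbc ((hw b ⟨hb, hu.1, hv.1⟩).trans (hw c ⟨hc, hu.2, hv.2⟩).symm)
    rcases Nat.lt_or_ge (b ∩ c).card 1 with h | h
    · exfalso
      have hdisj : Disjoint b c :=
        Finset.disjoint_iff_inter_eq_empty.mpr (Finset.card_eq_zero.mp (by omega))
      obtain ⟨x, hxb⟩ := Finset.card_pos.mp (by rw [(hblocks b hb).2]; norm_num)
      have hxX : x ∈ X := (hblocks b hb).1 hxb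
      have hxc : x ∉ c := Finset.disjoint_left.mp hdisj hxb
      have key : ∀ y : α, ∃ u, y ∈ c →
          (u ∈ B ∧ x ∈ u ∧ y ∈ u) ∧ ∀ v, v ∈ B ∧ x ∈ v ∧ y ∈ v → v = u := by
        intro y
        by_cases hy : y ∈ c
        · have hxy : x ≠ y := fun h => hxc (h ▸ hy)
          obtain ⟨u, hu1, hu2⟩ := hpair2 x y hxX ((hblocks c hc).1 hy) hxy
          exact ⟨u, fun _ => ⟨hu1, hu2⟩⟩
        · exact ⟨∅, fun h => absurd h hy⟩
      choose g hg using key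
      have hmaps : ∀ y ∈ c, g y ∈ (B.filter (fun b => x ∈ b)).erase b := by
        intro y hy
        obtain ⟨⟨h1, h2, h3⟩, _⟩ := hg y hy
        rw [Finset.mem_erase, Finset.mem_filter]
        exact ⟨fun he => (Finset.disjoint_left.mp hdisj (he ▸ h3) hy), h1, h2⟩
      have hinj : ∀ y ∈ c, ∀ y' ∈ c, g y = g y' → y = y' := by
        intro y hy y' hy' hgy
        by_contra hne
        obtain ⟨⟨h1, h2, h3⟩, _⟩ := hg y hy
        obtain ⟨⟨h1', h2', h3'⟩, _⟩ := hg y' hy'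
        obtain ⟨w, _, hw⟩ := hpair2 y y' ((hblocks c hc).1 hy) ((hblocks c hc).1 hy') hne
        have : g y = c := (hw (g y) ⟨h1, h3, hgy ▸ h3'⟩).trans (hw c ⟨hc, hy, hy'⟩).symm
        exact hxc (this ▸ h2)
      have hcard : c.card ≤ ((B.filter (fun b => x ∈ b)).erase b).card :=
        Finset.card_le_card_of_injOn g hmaps hinj
      have hbBx : b ∈ B.filter (fun b => x ∈ b) := Finset.mem_filter.mpr ⟨hb, hxb⟩
      rw [(hblocks c hc).2, Finset.card_erase_of_mem hbBx, hthree x hxX] at hcard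
      omega
    · omega
  -- the key summation identity: for any s ⊆ X,
  -- ∑ x ∈ s, (flow sum at x) = ∑ b ∈ B, (s ∩ b).card • f b
  have hswap : ∀ s : Finset α, s ⊆ X →
      ∑ x ∈ s, ∑ b ∈ B.filter (fun b => x ∈ b), f b
        = ∑ b ∈ B, ((s ∩ b).card : ℝ) * f b := by
    intro s _
    have : ∀ x, ∑ b ∈ B.filter (fun b => x ∈ b), f b
        = ∑ b ∈ B, if x ∈ b then f b else 0 := fun x => Finset.sum_filter _ _
    simp_rw [this]
    rw [Finset.sum_comm]
    refine Finset.sum_congr rfl fun b _ => ?_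
    rw [Finset.sum_ite_mem, Finset.sum_const, nsmul_eq_mul]
  -- total sum is zero
  have hS : ∑ b ∈ B, f b = 0 := by
    have h1 : ∑ x ∈ X, ∑ b ∈ B.filter (fun b => x ∈ b), f b = 0 :=
      Finset.sum_eq_zero hflow
    rw [hswap X (le_refl X)] at h1
    have h2 : ∀ b ∈ B, ((X ∩ b).card : ℝ) * f b = 3 * f b := by
      intro b hb
      rw [Finset.inter_eq_right.mpr (hblocks b hb).1, (hblocks b hb).2]
      norm_num
    rw [Finset.sum_congr rfl h2, ← Finset.mul_sum] at h1
    linarith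
  -- final argument
  intro b hb
  have hbsub := (hblocks b hb).1
  have h1 : ∑ x ∈ b, ∑ c ∈ B.filter (fun c => x ∈ c), f c = 0 :=
    Finset.sum_eq_zero fun x hx => hflow x (hbsub hx)
  rw [hswap b hbsub] at h1
  have h2 : ∑ c ∈ B, ((b ∩ c).card : ℝ) * f c
      = 2 * f b + ∑ c ∈ B, f c := by
    rw [← Finset.add_sum_erase _ _ hb, ← Finset.add_sum_erase _ f hb]
    have hbb : ((b ∩ b).card : ℝ) * f b = 3 * f b := by
      rw [Finset.inter_self, (hblocks b hb).2]; norm_num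
    have hrest : ∑ c ∈ B.erase b, ((b ∩ c).card : ℝ) * f c
        = ∑ c ∈ B.erase b, f c := by
      refine Finset.sum_congr rfl fun c hc => ?_
      rw [Finset.mem_erase] at hc
      rw [hmeet1 b hb c hc.2 (Ne.symm hc.1)]
      norm_num
    rw [hbb, hrest]; ring
  rw [h2, hS] at h1
  linarith
end

section
/- Let v ≡ 9 (mod 18) and let S be a cyclic Steiner triple system on ℤ_v (with automorphism i ↦ i+1). Then S has a full orbit of blocks whose blocks meet all three congruence classes modulo 3; equivalently, some block {a, b, c} in a full orbit satisfies that a, b, c are pairwise incongruent modulo 3. -/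
set_option maxHeartbeats 1000000

open Finset

private lemma sts_sum3 {α M : Type*} [DecidableEq α] [AddCommMonoid M] (a c d : α)
    (hac : a ≠ c) (had : a ≠ d) (hcd : c ≠ d) (f : α → M) :
    ∑ x ∈ ({a, c, d} : Finset α), f x = f a + f c + f d := by
  have h1 : a ∉ ({c, d} : Finset α) := by
    simp only [Finset.mem_insert, Finset.mem_singleton, not_or]; exact ⟨hac, had⟩
  have h2 : c ∉ ({d} : Finset α) := by simpa using hcd
  rw [Finset.sum_insert h1, Finset.sum_insert h2, Finset.sum_singleton, add_assoc]

private lemma sts_valadd1 (v : ℕ) [NeZero v] (hv9 : 9 ≤ v) (h3 : 3 ∣ v) (x : ZMod v) :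
    (x + 1).val % 3 = (x.val + 1) % 3 := by
  have h1 : (1 : ZMod v).val = 1 := by
    rw [ZMod.val_one_eq_one_mod, Nat.mod_eq_of_lt (by omega)]
  rw [ZMod.val_add, h1, Nat.mod_mod_of_dvd _ h3]

private lemma sts_classCard (v : ℕ) [NeZero v] (hv9 : 9 ≤ v) (h3 : 3 ∣ v) (r : ℕ) (hr : r < 3) :
    (Finset.univ.filter (fun x : ZMod v => x.val % 3 = r)).card = v / 3 := by
  set N : ℕ → ℕ := fun r => (Finset.univ.filter (fun x : ZMod v => x.val % 3 = r)).card with hN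
  have step : ∀ s : ℕ, s < 3 → N s ≤ N ((s + 1) % 3) := by
    intro s hs
    apply Finset.card_le_card_of_injOn (fun x => x + 1)
    · intro x hx
      simp only [mem_coe, mem_filter, mem_univ, true_and] at hx ⊢
      rw [sts_valadd1 v hv9 h3 x]
      omega
    · intro x _ y _ h
      exact add_right_cancel h
  have e01 : N 0 ≤ N 1 := step 0 (by norm_num)
  have e12 : N 1 ≤ N 2 := step 1 (by norm_num)
  have e20 : N 2 ≤ N 0 := step 2 (by norm_num)
  have hsum : N 0 + N 1 + N 2 = v := by
    have hu : (Finset.univ : Finset (ZMod v)) =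
        Finset.univ.filter (fun x : ZMod v => x.val % 3 = 0 ∨ x.val % 3 = 1 ∨ x.val % 3 = 2) := by
      rw [Finset.filter_true_of_mem]
      intro x _; omega
    have hcv : (Finset.univ : Finset (ZMod v)).card = v := by
      rw [Finset.card_univ, ZMod.card]
    rw [hu] at hcv
    rw [Finset.filter_or, Finset.filter_or] at hcv
    rw [Finset.card_union_of_disjoint, Finset.card_union_of_disjoint] at hcv
    · rw [← hcv]; ring
    · rw [Finset.disjoint_left]
      intro x hx1 hx2
      simp only [mem_filter, mem_univ, true_and] at hx1 hx2
      omega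
    · rw [Finset.disjoint_left]
      intro x hx1 hx2
      simp only [mem_filter, mem_univ, true_and, mem_union] at hx1 hx2
      omega
  have key : N 0 = v / 3 ∧ N 1 = v / 3 ∧ N 2 = v / 3 := by omega
  interval_cases r
  · exact key.1
  · exact key.2.1
  · exact key.2.2

private lemma sts_mixedCard (v : ℕ) [NeZero v] (hv9 : 9 ≤ v) (h3 : 3 ∣ v) :
    (Finset.univ.filter (fun p : ZMod v × ZMod v => p.1.val % 3 ≠ p.2.val % 3)).card
      = v * (v - v / 3) := by
  rw [← Finset.univ_product_univ, Finset.card_filter, Finset.sum_product]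
  have fib : ∀ x : ZMod v,
      (∑ y : ZMod v, if x.val % 3 ≠ y.val % 3 then 1 else 0) = v - v / 3 := by
    intro x
    rw [← Finset.card_filter]
    simp only [ne_eq]
    have hpn := Finset.card_filter_add_card_filter_not
      (s := (Finset.univ : Finset (ZMod v))) (p := fun y : ZMod v => x.val % 3 = y.val % 3)
    have h1 : (Finset.univ.filter (fun y : ZMod v => x.val % 3 = y.val % 3)).card = v / 3 := by
      have he : (Finset.univ.filter (fun y : ZMod v => x.val % 3 = y.val % 3))
          = Finset.univ.filter (fun y : ZMod v => y.val % 3 = x.val % 3) := by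
        ext y; simp [eq_comm]
      rw [he]
      exact sts_classCard v hv9 h3 _ (Nat.mod_lt _ (by norm_num))
    have h2 : (Finset.univ : Finset (ZMod v)).card = v := by rw [Finset.card_univ, ZMod.card]
    have h3' : v / 3 ≤ v := Nat.div_le_self _ _
    omega
  rw [Finset.sum_congr rfl (fun x _ => fib x), Finset.sum_const, Finset.card_univ, ZMod.card,
    smul_eq_mul]

private lemma sts_neCard (v : ℕ) [NeZero v] :
    (Finset.univ.filter (fun p : ZMod v × ZMod v => p.1 ≠ p.2)).card = v * v - v := by
  have h : (Finset.univ.filter (fun p : ZMod v × ZMod v => p.1 ≠ p.2))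
      = (Finset.univ : Finset (ZMod v)).offDiag := by
    ext p; simp [Finset.mem_offDiag]
  rw [h, Finset.offDiag_card, Finset.card_univ, ZMod.card]

private lemma sts_partition (v : ℕ) [NeZero v] (B : Finset (Finset (ZMod v)))
    (hpairs : ∀ x y : ZMod v, x ≠ y → ∃! b, b ∈ B ∧ x ∈ b ∧ y ∈ b)
    (P : ZMod v × ZMod v → Prop) [DecidablePred P] (hP : ∀ p, P p → p.1 ≠ p.2) :
    (Finset.univ.filter P).card = ∑ b ∈ B, ((b ×ˢ b).filter P).card := by
  have hu : Finset.univ.filter P = B.biUnion (fun b => (b ×ˢ b).filter P) := by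
    ext p
    simp only [mem_filter, mem_univ, true_and, mem_biUnion, Finset.mem_product]
    constructor
    · intro hp
      obtain ⟨b, ⟨hbB, hb1, hb2⟩, _⟩ := hpairs p.1 p.2 (hP p hp)
      exact ⟨b, hbB, ⟨hb1, hb2⟩, hp⟩
    · rintro ⟨b, _, _, hp⟩
      exact hp
  rw [hu]
  apply Finset.card_biUnion
  intro b1 hb1 b2 hb2 hne
  rw [Function.onFun, Finset.disjoint_left]
  intro p hp1 hp2
  simp only [mem_filter, Finset.mem_product] at hp1 hp2
  obtain ⟨b, _, huniq⟩ := hpairs p.1 p.2 (hP p hp1.2)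
  exact hne ((huniq b1 ⟨hb1, hp1.1⟩).trans (huniq b2 ⟨hb2, hp2.1⟩).symm)

private lemma sts_blockNe (v : ℕ) [NeZero v] (a c d : ZMod v)
    (hac : a ≠ c) (had : a ≠ d) (hcd : c ≠ d) :
    ((({a, c, d} : Finset (ZMod v)) ×ˢ {a, c, d}).filter (fun p => p.1 ≠ p.2)).card = 6 := by
  rw [Finset.card_filter, Finset.sum_product, sts_sum3 a c d hac had hcd,
    sts_sum3 a c d hac had hcd, sts_sum3 a c d hac had hcd, sts_sum3 a c d hac had hcd]
  simp [hac, had, hcd, hac.symm, had.symm, hcd.symm]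

private lemma sts_blockMixed (v : ℕ) [NeZero v] (a c d : ZMod v)
    (hac : a ≠ c) (had : a ≠ d) (hcd : c ≠ d)
    (hres : a.val % 3 = c.val % 3 ∨ a.val % 3 = d.val % 3 ∨ c.val % 3 = d.val % 3) :
    ((({a, c, d} : Finset (ZMod v)) ×ˢ {a, c, d}).filter
      (fun p => p.1.val % 3 ≠ p.2.val % 3)).card ≤ 4 := by
  rw [Finset.card_filter, Finset.sum_product, sts_sum3 a c d hac had hcd,
    sts_sum3 a c d hac had hcd, sts_sum3 a c d hac had hcd, sts_sum3 a c d hac had hcd]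
  simp only [ne_eq, ite_not]
  split_ifs <;> omega

private lemma sts_orbitFull (v : ℕ) [NeZero v] (hv9 : 9 ≤ v) (h9 : 9 ∣ v) (a c d : ZMod v)
    (h1 : a.val % 3 ≠ c.val % 3) (h2 : a.val % 3 ≠ d.val % 3) (h3 : c.val % 3 ≠ d.val % 3) :
    (Finset.univ.image (fun t : ZMod v =>
      ({a, c, d} : Finset (ZMod v)).image (fun x => x + t))).card = v := by
  have h3v : 3 ∣ v := dvd_trans (by norm_num) h9
  have hval3 : ∀ x u : ZMod v, 3 ∣ u.val → (x + u).val % 3 = x.val % 3 := by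
    intro x u hu
    rw [ZMod.val_add, Nat.mod_mod_of_dvd _ h3v]
    omega
  have hinj : Function.Injective (fun t : ZMod v =>
      ({a, c, d} : Finset (ZMod v)).image (fun x => x + t)) := by
    intro t s h
    simp only at h
    have himg : ({a, c, d} : Finset (ZMod v)).image (fun x => x + (t - s))
        = ({a, c, d} : Finset (ZMod v)) := by
      have hc := congrArg (Finset.image (fun x : ZMod v => x - s)) h
      rw [Finset.image_image, Finset.image_image] at hc
      have e1 : ((fun x : ZMod v => x - s) ∘ (fun x => x + t)) = fun x => x + (t - s) := by
        funext x; simp only [Function.comp_apply]; ring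
      have e2 : ((fun x : ZMod v => x - s) ∘ (fun x => x + s)) = id := by
        funext x; simp
      rw [e1, e2, Finset.image_id] at hc
      exact hc
    set u := t - s with hu
    have hac : a ≠ c := fun he => h1 (by rw [he])
    have had : a ≠ d := fun he => h2 (by rw [he])
    have hcd : c ≠ d := fun he => h3 (by rw [he])
    have hsum : ∑ x ∈ ({a, c, d} : Finset (ZMod v)).image (fun x => x + u), x
        = (∑ x ∈ ({a, c, d} : Finset (ZMod v)), x) + (u + u + u) := by
      rw [Finset.sum_image (fun x _ y _ hxy => by exact add_right_cancel hxy)]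
      rw [Finset.sum_add_distrib]
      congr 1
      rw [Finset.sum_const]
      have hcard : ({a, c, d} : Finset (ZMod v)).card = 3 := by
        rw [Finset.card_insert_of_notMem (by simp [hac, had]),
          Finset.card_insert_of_notMem (by simpa using hcd), Finset.card_singleton]
      rw [hcard]
      abel
    rw [himg] at hsum
    have h3u : u + u + u = 0 := by
      have := left_eq_add.mp hsum
      exact this
    have hdvd3 : 3 ∣ u.val := by
      have hcast : ((3 * u.val : ℕ) : ZMod v) = 0 := by
        push_cast
        rw [ZMod.natCast_zmod_val]
        rw [← h3u]; ring
      have hdvd : v ∣ 3 * u.val := (ZMod.natCast_eq_zero_iff _ _).mp hcast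
      obtain ⟨m, hm⟩ := hdvd
      have hlt : u.val < v := ZMod.val_lt u
      have hm3 : m < 3 := by
        rcases Nat.lt_or_ge m 3 with hc | hc
        · exact hc
        · exfalso
          have := Nat.mul_le_mul_left v hc
          omega
      obtain ⟨k, hk⟩ := h9
      interval_cases m <;> omega
    have hmem : a + u ∈ ({a, c, d} : Finset (ZMod v)) := by
      rw [← himg]
      exact Finset.mem_image_of_mem _ (by simp)
    have hres : (a + u).val % 3 = a.val % 3 := hval3 a u hdvd3
    have hu0 : u = 0 := by
      simp only [Finset.mem_insert, Finset.mem_singleton] at hmem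
      rcases hmem with he | he | he
      · exact add_eq_left.mp he
      · exact absurd (by rw [← he, hres]) (Ne.symm h1)
      · exact absurd (by rw [← he, hres]) (Ne.symm h2)
    have := sub_eq_zero.mp (hu ▸ hu0)
    exact this
  rw [Finset.card_image_of_injective _ hinj, Finset.card_univ, ZMod.card]

/-- for v ≡ 9 (mod 18), every cyclic STS(v) on ℤ_v has a full orbit of
Type 3: some block {a,c,d} whose orbit under translation has size v and whose elements
are pairwise incongruent modulo 3. -/
theorem cyclic_sts_full_orbit_type3 (v : ℕ) [NeZero v] (hv : v % 18 = 9)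
    (B : Finset (Finset (ZMod v)))
    (hcard : ∀ b ∈ B, b.card = 3)
    (hpairs : ∀ x y : ZMod v, x ≠ y → ∃! b, b ∈ B ∧ x ∈ b ∧ y ∈ b)
    (hcyc : ∀ b ∈ B, b.image (fun x => x + 1) ∈ B) :
    ∃ b ∈ B,
      (Finset.univ.image (fun t : ZMod v => b.image (fun x => x + t))).card = v ∧
      ∃ a c d : ZMod v, b = {a, c, d} ∧
        a.val % 3 ≠ c.val % 3 ∧ a.val % 3 ≠ d.val % 3 ∧ c.val % 3 ≠ d.val % 3 := by
  have hv9 : 9 ≤ v := by omega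
  have h9 : 9 ∣ v := by omega
  have h3v : 3 ∣ v := by omega
  have key : ∃ b ∈ B, ∃ a c d : ZMod v, b = {a, c, d} ∧
      a.val % 3 ≠ c.val % 3 ∧ a.val % 3 ≠ d.val % 3 ∧ c.val % 3 ≠ d.val % 3 := by
    by_contra hA
    push_neg at hA
    -- every block has a non-pairwise-distinct residue pattern
    have hMb : ∀ b ∈ B, ((b ×ˢ b).filter
        (fun p : ZMod v × ZMod v => p.1.val % 3 ≠ p.2.val % 3)).card ≤ 4 := by
      intro b hb
      obtain ⟨a, c, d, hac, had, hcd, hbd⟩ := Finset.card_eq_three.mp (hcard b hb)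
      have hres : a.val % 3 = c.val % 3 ∨ a.val % 3 = d.val % 3 ∨ c.val % 3 = d.val % 3 := by
        by_cases r1 : a.val % 3 = c.val % 3
        · exact Or.inl r1
        by_cases r2 : a.val % 3 = d.val % 3
        · exact Or.inr (Or.inl r2)
        have := hA b hb a c d hbd r1 r2
        exact Or.inr (Or.inr this)
      rw [hbd]
      exact sts_blockMixed v a c d hac had hcd hres
    have hYb : ∀ b ∈ B, ((b ×ˢ b).filter
        (fun p : ZMod v × ZMod v => p.1 ≠ p.2)).card = 6 := by
      intro b hb
      obtain ⟨a, c, d, hac, had, hcd, hbd⟩ := Finset.card_eq_three.mp (hcard b hb)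
      rw [hbd]
      exact sts_blockNe v a c d hac had hcd
    have hc1 := sts_partition v B hpairs
      (fun p : ZMod v × ZMod v => p.1.val % 3 ≠ p.2.val % 3)
      (fun p hp => fun he => hp (by rw [he]))
    have hc2 := sts_partition v B hpairs
      (fun p : ZMod v × ZMod v => p.1 ≠ p.2) (fun p hp => hp)
    rw [sts_mixedCard v hv9 h3v] at hc1
    rw [sts_neCard v] at hc2
    have hle : v * (v - v / 3) ≤ 4 * B.card := by
      rw [hc1]
      calc ∑ b ∈ B, ((b ×ˢ b).filter
            (fun p : ZMod v × ZMod v => p.1.val % 3 ≠ p.2.val % 3)).card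
          ≤ ∑ b ∈ B, 4 := Finset.sum_le_sum hMb
        _ = 4 * B.card := by rw [Finset.sum_const, smul_eq_mul, mul_comm]
    have heq : v * v - v = 6 * B.card := by
      rw [hc2]
      rw [Finset.sum_congr rfl hYb, Finset.sum_const, smul_eq_mul, mul_comm]
    -- arithmetic contradiction
    obtain ⟨w, hw⟩ : ∃ w, v = 3 * w := h3v
    have e1 : v * (v - v / 3) = 6 * (w * w) := by
      have : v - v / 3 = 2 * w := by omega
      rw [this, hw]; ring
    have e2 : v * v = 9 * (w * w) := by rw [hw]; ring
    rw [e1] at hle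
    rw [e2] at heq
    have hw3 : 3 ≤ w := by omega
    set W := w * w with hW
    have hWw : w ≤ W := by
      calc w = w * 1 := (mul_one w).symm
        _ ≤ w * w := Nat.mul_le_mul_left w (by omega)
    omega
  obtain ⟨b, hb, a, c, d, hbd, h1, h2, h3⟩ := key
  refine ⟨b, hb, ?_, a, c, d, hbd, h1, h2, h3⟩
  rw [hbd]
  exact sts_orbitFull v hv9 h9 a c d h1 h2 h3
end

section
/- Let v ≡ 3 or 15 (mod 18) and let S be a cyclic Steiner triple system on ℤ_v with no full orbit of Type 3 (no full orbit whose blocks meet all three residue classes mod 3). Then S also has no full orbit of Type 1, i.e., no full orbit whose blocks lie entirely within a single residue class modulo 3; in fact all (v−3)/6 full orbits are of Type 2. -/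
open Finset

private lemma count_range_mod (a b r : ℕ) (hr : r < b) :
    ((Finset.range (a * b)).filter (fun n => n % b = r)).card = a := by
  have hb : 0 < b := by omega
  have h := Finset.card_nbij' (s := (Finset.range (a * b)).filter (fun n => n % b = r))
    (t := Finset.range a) (fun n => n / b) (fun i => i * b + r)
    (by
      intro n hn
      simp only [Finset.mem_coe, mem_filter, mem_range] at hn ⊢
      exact Nat.div_lt_of_lt_mul (by rw [mul_comm]; exact hn.1))
    (by
      intro i hi
      simp only [Finset.mem_coe, mem_range] at hi
      simp only [Finset.mem_coe, mem_filter, mem_range]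
      refine ⟨?_, ?_⟩
      · calc i * b + r < i * b + b := Nat.add_lt_add_left hr _
          _ = (i + 1) * b := by ring
          _ ≤ a * b := Nat.mul_le_mul_right b (by omega)
      · rw [add_comm, Nat.add_mul_mod_self_right, Nat.mod_eq_of_lt hr])
    (by
      intro n hn
      simp only [Finset.mem_coe, mem_filter, mem_range] at hn
      conv_rhs => rw [← Nat.div_add_mod n b]
      rw [hn.2, mul_comm])
    (by
      intro i _
      show (i * b + r) / b = i
      rw [mul_comm, Nat.mul_add_div hb, Nat.div_eq_of_lt hr, add_zero])
  rwa [Finset.card_range] at h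

private lemma zmod_class_card (v : ℕ) [NeZero v] (a b r : ℕ) (hv : v = a * b) (hr : r < b) :
    (Finset.univ.filter (fun x : ZMod v => x.val % b = r)).card = a := by
  rw [← count_range_mod a b r hr, ← hv]
  apply Finset.card_nbij' (t := (Finset.range v).filter (fun n => n % b = r))
      (fun x => x.val) (fun n => (n : ZMod v))
  · intro x hx
    simp only [Finset.mem_coe, mem_filter, mem_univ, true_and] at hx
    simp only [Finset.mem_coe, mem_filter, mem_range]
    exact ⟨ZMod.val_lt x, hx⟩
  · intro n hn
    simp only [Finset.mem_coe, mem_filter, mem_range] at hn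
    simp only [Finset.mem_coe, mem_filter, mem_univ, true_and]
    rw [ZMod.val_natCast_of_lt hn.1]
    exact hn.2
  · intro x _
    exact ZMod.natCast_zmod_val x
  · intro n hn
    simp only [Finset.mem_coe, mem_filter, mem_range] at hn
    exact ZMod.val_natCast_of_lt hn.1

private lemma val_add_mod (v : ℕ) [NeZero v] (c : ℕ) (hc : c ∣ v) (x y : ZMod v) :
    (x + y).val % c = (x.val + y.val) % c := by
  rw [ZMod.val_add, Nat.mod_mod_of_dvd _ hc]


private lemma short_block (v : ℕ) [NeZero v] (b : Finset (ZMod v)) (hb3 : b.card = 3)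
    (hnf : (Finset.univ.image (fun t : ZMod v => b.image (fun x => x + t))).card ≠ v) :
    ∃ x s : ZMod v, s ≠ 0 ∧ s + s + s = 0 ∧ b = {x, x + s, x + s + s} := by
  classical
  -- the translation map is not injective
  have hninj : ¬ Set.InjOn (fun t : ZMod v => b.image (fun x => x + t))
      (Finset.univ : Finset (ZMod v)) := by
    intro h
    apply hnf
    rw [Finset.card_image_of_injOn h, Finset.card_univ, ZMod.card]
  rw [Set.InjOn] at hninj
  push_neg at hninj
  obtain ⟨t1, -, t2, -, heq, hne⟩ := hninj
  set s : ZMod v := t1 - t2 with hs_def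
  have hs : s ≠ 0 := sub_ne_zero.mpr hne
  clear_value s
  have himg : b.image (fun x => x + s) = b := by
    have h2 : (b.image (fun x => x + t1)).image (fun x => x + (-t2))
            = (b.image (fun x => x + t2)).image (fun x => x + (-t2)) := by rw [heq]
    rw [Finset.image_image, Finset.image_image] at h2
    have e1 : ((fun x : ZMod v => x + -t2) ∘ fun x => x + t1) = fun x => x + s := by
      funext x; simp [hs_def, sub_eq_add_neg, add_assoc]
    have e2 : ((fun x : ZMod v => x + -t2) ∘ fun x => x + t2) = fun x => x := by
      funext x; simp
    rw [e1, e2, Finset.image_id'] at h2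
    exact h2
  have hcl : ∀ x ∈ b, x + s ∈ b := by
    intro x hx
    rw [← himg]
    exact Finset.mem_image_of_mem _ hx
  obtain ⟨x0, hx0⟩ := Finset.card_pos.mp (by omega : 0 < b.card)
  have hx1 : x0 + s ∈ b := hcl x0 hx0
  have hne1 : x0 ≠ x0 + s := by
    intro h; exact hs (by simpa using h.symm)
  -- s + s ≠ 0
  have h2s : s + s ≠ 0 := by
    intro h2s
    have hnsub : ¬ b ⊆ {x0, x0 + s} := by
      intro hsub
      have := Finset.card_le_card hsub
      have hc2 : ({x0, x0 + s} : Finset (ZMod v)).card ≤ 2 := Finset.card_insert_le _ _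
      omega
    obtain ⟨z, hz, hzn⟩ := Finset.not_subset.mp hnsub
    simp only [Finset.mem_insert, Finset.mem_singleton, not_or] at hzn
    obtain ⟨hz1, hz2⟩ := hzn
    have hsub : ({x0, x0 + s, z} : Finset (ZMod v)) ⊆ b := by
      intro w hw
      simp only [Finset.mem_insert, Finset.mem_singleton] at hw
      rcases hw with rfl | rfl | rfl <;> assumption
    have hc3 : ({x0, x0 + s, z} : Finset (ZMod v)).card = 3 := by
      rw [Finset.card_insert_of_notMem (by simp [hne1, hz1, hz2, Ne.symm hz1]),
        Finset.card_insert_of_notMem (by simp [Ne.symm hz2]), Finset.card_singleton]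
    have hbeq : b = {x0, x0 + s, z} := (Finset.eq_of_subset_of_card_le hsub (by omega)).symm
    have hzs : z + s ∈ b := hcl z hz
    rw [hbeq] at hzs
    simp only [Finset.mem_insert, Finset.mem_singleton] at hzs
    rcases hzs with h | h | h
    · -- z + s = x0, so z = x0 - s = x0 + s  (since s + s = 0)
      apply hz2
      have hz' : z = x0 - s := by rw [← h]; ring
      rw [hz']
      have : x0 - s - (x0 + s) = -(s + s) := by ring
      have h0 : x0 - s - (x0 + s) = 0 := by rw [this, h2s, neg_zero]
      exact sub_eq_zero.mp h0
    · exact hz1 (by simpa using h)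
    · exact hs (by simpa using h)
  -- now the main case analysis
  by_cases hxx : x0 + s + s = x0
  · exact absurd (by have := hxx; simpa [add_assoc] using this) h2s
  · have hne2 : x0 + s ≠ x0 + s + s := by
      intro h; exact hs (by simpa using h.symm)
    have hne3 : x0 ≠ x0 + s + s := fun h => hxx h.symm
    have hx2 : x0 + s + s ∈ b := hcl _ hx1
    have hsub : ({x0, x0 + s, x0 + s + s} : Finset (ZMod v)) ⊆ b := by
      intro w hw
      simp only [Finset.mem_insert, Finset.mem_singleton] at hw
      rcases hw with rfl | rfl | rfl <;> assumption
    have hc3 : ({x0, x0 + s, x0 + s + s} : Finset (ZMod v)).card = 3 := by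
      rw [Finset.card_insert_of_notMem (by simp [hne1, hne3]),
        Finset.card_insert_of_notMem (by simp [hne2]), Finset.card_singleton]
    have hbeq : b = {x0, x0 + s, x0 + s + s} :=
      (Finset.eq_of_subset_of_card_le hsub (by omega)).symm
    have hx3 : x0 + s + s + s ∈ b := hcl _ hx2
    rw [hbeq] at hx3
    simp only [Finset.mem_insert, Finset.mem_singleton] at hx3
    rcases hx3 with h | h | h
    · refine ⟨x0, s, hs, ?_, hbeq⟩
      have h' : x0 + (s + s + s) = x0 + 0 := by rw [add_zero, ← add_assoc, ← add_assoc]; exact h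
      exact add_left_cancel h'
    · exfalso
      apply h2s
      have h' : x0 + s + (s + s) = x0 + s + 0 := by rw [add_zero, ← add_assoc]; exact h
      exact add_left_cancel h'
    · exact absurd (by simpa using h) hs




private lemma short_block_props (v m : ℕ) [NeZero v] (hm : v = 3 * m)
    (hm3 : m % 3 = 1 ∨ m % 3 = 2) (b : Finset (ZMod v)) (hb3 : b.card = 3)
    (hnf : (Finset.univ.image (fun t : ZMod v => b.image (fun x => x + t))).card ≠ v) :
    (b.offDiag.filter (fun p => p.1.val % 3 = p.2.val % 3)) = ∅ ∧
    ∃ r < m, b = Finset.univ.filter (fun z : ZMod v => z.val % m = r) := by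
  have hmpos : 0 < m := by omega
  obtain ⟨x, s, hs, h3s, hbeq⟩ := short_block v b hb3 hnf
  -- s.val = m or 2m
  have hdvd : v ∣ s.val + s.val + s.val := by
    rw [← ZMod.natCast_eq_zero_iff]
    push_cast [ZMod.natCast_zmod_val]
    exact h3s
  have hsv : s.val = m ∨ s.val = 2 * m := by
    have hmd : m ∣ s.val := by
      have h3d : 3 * m ∣ 3 * s.val := by
        rw [← hm]; have : s.val + s.val + s.val = 3 * s.val := by ring
        rwa [this] at hdvd
      exact (mul_dvd_mul_iff_left (by norm_num : (3:ℕ) ≠ 0)).mp h3d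
    obtain ⟨j, hj⟩ := hmd
    have hlt : s.val < v := ZMod.val_lt s
    have hs0 : s.val ≠ 0 := fun h => hs (by rwa [ZMod.val_eq_zero] at h)
    have hj3 : j < 3 := by
      by_contra hj3
      push_neg at hj3
      have : m * 3 ≤ m * j := Nat.mul_le_mul_left m hj3
      omega
    interval_cases j <;> omega
  have h1 : (x + s).val % 3 = (x.val + s.val) % 3 := val_add_mod v 3 ⟨m, hm⟩ x s
  have h2 : (x + s + s).val % 3 = ((x + s).val + s.val) % 3 := val_add_mod v 3 ⟨m, hm⟩ _ s
  constructor
  · rw [Finset.eq_empty_iff_forall_notMem]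
    rintro ⟨p1, p2⟩ hp
    simp only [Finset.mem_filter, Finset.mem_offDiag, hbeq, Finset.mem_insert,
      Finset.mem_singleton] at hp
    obtain ⟨⟨hp1, hp2, hne⟩, hsame⟩ := hp
    
    rcases hp1 with rfl | rfl | rfl <;> rcases hp2 with rfl | rfl | rfl <;>
      first
        | exact hne rfl
        | omega
  · have hmv : m ∣ v := ⟨3, by omega⟩
    have hstep : ∀ y : ZMod v, (y + s).val % m = y.val % m := by
      intro y
      rw [val_add_mod v m hmv y s]
      rcases hsv with h | h
      · rw [h, Nat.add_mod_right]
      · rw [h, show y.val + 2 * m = y.val + m + m by ring, Nat.add_mod_right, Nat.add_mod_right]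
    refine ⟨x.val % m, Nat.mod_lt _ hmpos, ?_⟩
    have hsub : b ⊆ Finset.univ.filter (fun z : ZMod v => z.val % m = x.val % m) := by
      intro z hz
      rw [hbeq] at hz
      simp only [Finset.mem_insert, Finset.mem_singleton] at hz
      simp only [Finset.mem_filter, Finset.mem_univ, true_and]
      rcases hz with rfl | rfl | rfl
      · rfl
      · exact hstep x
      · rw [hstep (x + s), hstep x]
    have hcf : (Finset.univ.filter (fun z : ZMod v => z.val % m = x.val % m)).card = 3 :=
      zmod_class_card v 3 m (x.val % m) hm (Nat.mod_lt _ hmpos)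
    exact Finset.eq_of_subset_of_card_le hsub (by omega)


/-- for v ≡ 3 or 15 (mod 18), a cyclic STS(v) with no full orbit of Type 3
has no full orbit of Type 1: every block lying in a full orbit meets exactly two residue
classes modulo 3. -/
theorem cyclic_sts_no_type3_no_type1 (v : ℕ) [NeZero v]
    (hv : v % 18 = 3 ∨ v % 18 = 15)
    (B : Finset (Finset (ZMod v)))
    (hcard : ∀ b ∈ B, b.card = 3)
    (hpairs : ∀ x y : ZMod v, x ≠ y → ∃! b, b ∈ B ∧ x ∈ b ∧ y ∈ b)
    (hcyc : ∀ b ∈ B, b.image (fun x => x + 1) ∈ B)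
    (hno3 : ¬ ∃ b ∈ B,
      (Finset.univ.image (fun t : ZMod v => b.image (fun x => x + t))).card = v ∧
      (b.image (fun x : ZMod v => x.val % 3)).card = 3) :
    ∀ b ∈ B,
      (Finset.univ.image (fun t : ZMod v => b.image (fun x => x + t))).card = v →
      (b.image (fun x : ZMod v => x.val % 3)).card = 2 := by
  classical
  push_neg at hno3
  obtain ⟨m, hm, hm3⟩ : ∃ m, v = 3 * m ∧ (m % 3 = 1 ∨ m % 3 = 2) :=
    ⟨v / 3, by omega, by omega⟩
  set f : Finset (ZMod v) → ℕ :=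
    fun b => (b.offDiag.filter (fun p => p.1.val % 3 = p.2.val % 3)).card with hf_def
  -- the union of offDiags of blocks is the offDiag of univ
  have hunion : (Finset.univ : Finset (ZMod v)).offDiag = B.biUnion (fun b => b.offDiag) := by
    ext p
    simp only [Finset.mem_offDiag, Finset.mem_biUnion, Finset.mem_univ, true_and]
    constructor
    · intro hne
      obtain ⟨b, ⟨hbB, h1, h2⟩, -⟩ := hpairs p.1 p.2 hne
      exact ⟨b, hbB, h1, h2, hne⟩
    · rintro ⟨b, -, -, -, h⟩
      exact h
  have hdisj : ∀ b ∈ B, ∀ b' ∈ B, b ≠ b' → Disjoint b.offDiag b'.offDiag := by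
    intro b hb b' hb' hne
    rw [Finset.disjoint_left]
    intro p hp hp'
    rw [Finset.mem_offDiag] at hp hp'
    obtain ⟨c, -, hcu⟩ := hpairs p.1 p.2 hp.2.2
    exact hne ((hcu b ⟨hb, hp.1, hp.2.1⟩).trans (hcu b' ⟨hb', hp'.1, hp'.2.1⟩).symm)
  -- total block count
  have hB6 : v * v - v = 6 * B.card := by
    have h1 : v * v - v = ∑ b ∈ B, b.offDiag.card := by
      rw [← Finset.card_biUnion hdisj, ← hunion, Finset.offDiag_card, Finset.card_univ, ZMod.card]
    rw [h1, Finset.sum_congr rfl (fun b hb => by rw [Finset.offDiag_card, hcard b hb]),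
      Finset.sum_const, smul_eq_mul, mul_comm]
  -- total same-class pair count, via blocks
  have hQ1 : ((Finset.univ : Finset (ZMod v)).offDiag.filter
      (fun p => p.1.val % 3 = p.2.val % 3)).card = ∑ b ∈ B, f b := by
    rw [hunion, Finset.filter_biUnion]
    exact Finset.card_biUnion (fun b hb b' hb' hne =>
      Finset.disjoint_filter_filter (hdisj b hb b' hb' hne))
  -- total same-class pair count, via residue classes
  have hQ2 : ((Finset.univ : Finset (ZMod v)).offDiag.filter
      (fun p => p.1.val % 3 = p.2.val % 3)).card = 3 * (m * m - m) := by
    have hsplit : (Finset.univ : Finset (ZMod v)).offDiag.filter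
        (fun p => p.1.val % 3 = p.2.val % 3)
        = (Finset.range 3).biUnion
          (fun r => (Finset.univ.filter (fun x : ZMod v => x.val % 3 = r)).offDiag) := by
      ext p
      simp only [Finset.mem_filter, Finset.mem_offDiag, Finset.mem_biUnion, Finset.mem_range,
        Finset.mem_univ, true_and]
      constructor
      · rintro ⟨hne, hsame⟩
        exact ⟨p.1.val % 3, Nat.mod_lt _ (by norm_num), rfl, hsame.symm, hne⟩
      · rintro ⟨r, -, h1, h2, hne⟩
        exact ⟨hne, by rw [h1, h2]⟩
    rw [hsplit, Finset.card_biUnion]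
    · have : ∀ r ∈ Finset.range 3,
          ((Finset.univ.filter (fun x : ZMod v => x.val % 3 = r)).offDiag).card = m * m - m := by
        intro r hr
        rw [Finset.offDiag_card, zmod_class_card v m 3 r (by omega) (Finset.mem_range.mp hr)]
      rw [Finset.sum_congr rfl this, Finset.sum_const, Finset.card_range, smul_eq_mul]
    · intro r hr r' hr' hne
      simp only [Function.onFun]
      rw [Finset.disjoint_left]
      rintro p hp hp'
      rw [Finset.mem_offDiag] at hp hp'
      have e1 := (Finset.mem_filter.mp hp.1).2
      have e2 := (Finset.mem_filter.mp hp'.1).2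
      exact hne (e1 ▸ e2)
  -- split into full and short blocks
  set P : Finset (ZMod v) → Prop :=
    fun b => (Finset.univ.image (fun t : ZMod v => b.image (fun x => x + t))).card = v with hP_def
  have hsum_split : ∑ b ∈ B, f b
      = ∑ b ∈ B.filter P, f b + ∑ b ∈ B.filter (fun b => ¬ P b), f b :=
    (Finset.sum_filter_add_sum_filter_not B P f).symm
  -- short blocks contribute 0
  have hshort0 : ∑ b ∈ B.filter (fun b => ¬ P b), f b = 0 := by
    apply Finset.sum_eq_zero
    intro b hb
    rw [Finset.mem_filter] at hb
    have := (short_block_props v m hm hm3 b (hcard b hb.1) hb.2).1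
    rw [hf_def]
    simp only [this, Finset.card_empty]
  -- at most m short blocks
  have hshort_card : (B.filter (fun b => ¬ P b)).card ≤ m := by
    have hsub : B.filter (fun b => ¬ P b)
        ⊆ (Finset.range m).image (fun r => Finset.univ.filter (fun z : ZMod v => z.val % m = r)) := by
      intro b hb
      rw [Finset.mem_filter] at hb
      obtain ⟨r, hr, hbeq⟩ := (short_block_props v m hm hm3 b (hcard b hb.1) hb.2).2
      rw [Finset.mem_image]
      exact ⟨r, Finset.mem_range.mpr hr, hbeq.symm⟩
    calc (B.filter (fun b => ¬ P b)).card
        ≤ _ := Finset.card_le_card hsub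
      _ ≤ (Finset.range m).card := Finset.card_image_le
      _ = m := Finset.card_range m
  -- each full block has f ≥ 2
  have hge : ∀ b ∈ B.filter P, 2 ≤ f b := by
    intro b hb
    rw [Finset.mem_filter] at hb
    have hne3 : (b.image (fun x : ZMod v => x.val % 3)).card ≠ 3 := hno3 b hb.1 hb.2
    have hle : (b.image (fun x : ZMod v => x.val % 3)).card ≤ 3 := by
      calc _ ≤ b.card := Finset.card_image_le
        _ = 3 := hcard b hb.1
    have hninj : ¬ Set.InjOn (fun x : ZMod v => x.val % 3) b := by
      intro hinj
      rw [← Finset.card_image_iff] at hinj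
      rw [hcard b hb.1] at hinj
      omega
    rw [Set.InjOn] at hninj
    push_neg at hninj
    obtain ⟨x, hx, y, hy, hxy, hnexy⟩ := hninj
    rw [Finset.mem_coe] at hx hy
    have h1 : (x, y) ∈ b.offDiag.filter (fun p => p.1.val % 3 = p.2.val % 3) := by
      rw [Finset.mem_filter, Finset.mem_offDiag]
      exact ⟨⟨hx, hy, hnexy⟩, hxy⟩
    have h2 : (y, x) ∈ b.offDiag.filter (fun p => p.1.val % 3 = p.2.val % 3) := by
      rw [Finset.mem_filter, Finset.mem_offDiag]
      exact ⟨⟨hy, hx, Ne.symm hnexy⟩, hxy.symm⟩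
    have := Finset.one_lt_card.mpr ⟨(x, y), h1, (y, x), h2, by simp [hnexy]⟩
    exact this
  -- the counting argument: every full block has f = 2
  have hM : v * v = 9 * (m * m) := by rw [hm]; ring
  have hcards : B.card = (B.filter P).card + (B.filter (fun b => ¬ P b)).card :=
    (Finset.card_filter_add_card_filter_not (p := P)).symm
  have hsum_full : ∑ b ∈ B.filter P, f b = 3 * (m * m - m) := by omega
  have hsum_ge : 2 * (B.filter P).card ≤ ∑ b ∈ B.filter P, f b := by
    calc 2 * (B.filter P).card = ∑ _b ∈ B.filter P, 2 := by
          rw [Finset.sum_const, smul_eq_mul, mul_comm]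
      _ ≤ _ := Finset.sum_le_sum hge
  have hfull_card_ge : B.card - m ≤ (B.filter P).card := by omega
  have heq2 : ∑ b ∈ B.filter P, f b = 2 * (B.filter P).card := by omega
  have heach : ∀ b ∈ B.filter P, f b = 2 := by
    intro b hb
    by_contra hneq
    have h3 : 2 < f b := lt_of_le_of_ne (hge b hb) (Ne.symm hneq)
    have hlt : ∑ _b ∈ B.filter P, 2 < ∑ b ∈ B.filter P, f b :=
      Finset.sum_lt_sum hge ⟨b, hb, h3⟩
    rw [Finset.sum_const, smul_eq_mul, mul_comm] at hlt
    omega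
  -- conclude
  intro b hb hfull
  have hbP : b ∈ B.filter P := Finset.mem_filter.mpr ⟨hb, hfull⟩
  have hfb : f b = 2 := heach b hbP
  have hne3 : (b.image (fun x : ZMod v => x.val % 3)).card ≠ 3 := hno3 b hb hfull
  have hle : (b.image (fun x : ZMod v => x.val % 3)).card ≤ 3 := by
    calc _ ≤ b.card := Finset.card_image_le
      _ = 3 := hcard b hb
  have hpos : 0 < (b.image (fun x : ZMod v => x.val % 3)).card := by
    rw [Finset.card_pos, Finset.image_nonempty, ← Finset.card_pos, hcard b hb]
    norm_num
  have hne1 : (b.image (fun x : ZMod v => x.val % 3)).card ≠ 1 := by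
    intro h1
    obtain ⟨r, hr⟩ := Finset.card_eq_one.mp h1
    have hall : ∀ z ∈ b, z.val % 3 = r := by
      intro z hz
      have : z.val % 3 ∈ b.image (fun x : ZMod v => x.val % 3) :=
        Finset.mem_image_of_mem _ hz
      rw [hr, Finset.mem_singleton] at this
      exact this
    have hfilt : b.offDiag.filter (fun p => p.1.val % 3 = p.2.val % 3) = b.offDiag := by
      apply Finset.filter_true_of_mem
      intro p hp
      rw [Finset.mem_offDiag] at hp
      rw [hall p.1 hp.1, hall p.2 hp.2.1]
    rw [hf_def] at hfb
    simp only [hfilt, Finset.offDiag_card, hcard b hb] at hfb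
    omega
  omega
end

section
/- Every cyclic Steiner triple system STS(v) with v ≡ 9 (mod 18) admits a zero-sum 3-flow, i.e., an assignment of values from {+1, −1, +2, −2} to the blocks such that the values of the blocks through any point sum to zero. -/
open Finset

namespace CyclicSTS9

variable {v : ℕ}

/-- Shift of a block by `i`. -/
def sh (i : ZMod v) (b : Finset (ZMod v)) : Finset (ZMod v) := b.image (· + i)

lemma mem_sh {i x : ZMod v} {b : Finset (ZMod v)} : x ∈ sh i b ↔ x - i ∈ b := by
  constructor
  · rintro h
    rcases Finset.mem_image.1 h with ⟨y, hy, rfl⟩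
    simpa using hy
  · intro h
    exact Finset.mem_image.2 ⟨x - i, h, by ring⟩

lemma sh_sh (i j : ZMod v) (b : Finset (ZMod v)) : sh j (sh i b) = sh (i + j) b := by
  unfold sh
  rw [Finset.image_image]
  congr 1
  funext a
  simp [add_assoc]

lemma sh_zero (b : Finset (ZMod v)) : sh 0 b = b := by
  unfold sh; simp

lemma sh_injective (i : ZMod v) : Function.Injective (sh (v := v) i) := by
  intro b b' h
  have : sh (-i) (sh i b) = sh (-i) (sh i b') := by rw [h]
  rwa [sh_sh, sh_sh, add_neg_cancel, sh_zero, sh_zero] at this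

lemma sh_card (i : ZMod v) (b : Finset (ZMod v)) : (sh i b).card = b.card :=
  Finset.card_image_of_injective _ (add_left_injective i)

lemma mem_sh' {i a : ZMod v} {b : Finset (ZMod v)} (ha : a ∈ b) : a + i ∈ sh i b :=
  Finset.mem_image.2 ⟨a, ha, rfl⟩

/-- auxiliary: a ±1 assignment on a finset whose sum is 0 or -1 -/
lemma exists_pm_one (α : Type*) [DecidableEq α] (R : Finset α) :
    ∃ g : α → ℤ, (∀ r ∈ R, g r = 1 ∨ g r = -1) ∧
      ((∑ r ∈ R, g r) = 0 ∨ (∑ r ∈ R, g r) = -1) := by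
  classical
  induction R using Finset.induction_on with
  | empty => exact ⟨fun _ => 1, by simp, by simp⟩
  | @insert a R ha ih =>
    obtain ⟨g, hg1, hg2⟩ := ih
    have key : ∀ w : ℤ, ∃ g' : α → ℤ, g' a = w ∧ ∀ r ∈ R, g' r = g r := by
      intro w
      refine ⟨Function.update g a w, Function.update_self _ _ _, fun r hr => ?_⟩
      have : r ≠ a := fun h => ha (h ▸ hr)
      exact Function.update_of_ne this _ _
    rcases hg2 with h0 | h1
    · obtain ⟨g', hga, hgR⟩ := key (-1)
      refine ⟨g', ?_, Or.inr ?_⟩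
      · intro r hr
        rcases Finset.mem_insert.1 hr with rfl | hr'
        · rw [hga]; simp
        · rw [hgR r hr']; exact hg1 r hr'
      · rw [Finset.sum_insert ha, hga, Finset.sum_congr rfl (fun r hr => hgR r hr), h0]
        ring
    · obtain ⟨g', hga, hgR⟩ := key 1
      refine ⟨g', ?_, Or.inl ?_⟩
      · intro r hr
        rcases Finset.mem_insert.1 hr with rfl | hr'
        · rw [hga]; simp
        · rw [hgR r hr']; exact hg1 r hr'
      · rw [Finset.sum_insert ha, hga, Finset.sum_congr rfl (fun r hr => hgR r hr), h1]
        ring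

/-- card of a filtered product -/
lemma card_product_filter {α β : Type*} [DecidableEq α] [DecidableEq β]
    (s : Finset α) (t : Finset β) (p : α × β → Prop) [DecidablePred p] :
    ((s ×ˢ t).filter p).card = ∑ x ∈ s, (t.filter fun y => p (x, y)).card := by
  classical
  rw [Finset.card_eq_sum_card_fiberwise
    (f := Prod.fst) (t := s)
    (fun z hz => (Finset.mem_product.1 (Finset.mem_filter.1 hz).1).1)]
  refine Finset.sum_congr rfl fun x hx => ?_
  refine Finset.card_bij (fun z _ => z.2) ?_ ?_ ?_
  · intro z hz
    simp only [Finset.mem_filter] at hz ⊢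
    obtain ⟨⟨hz1, hz2⟩, hfst⟩ := hz
    obtain ⟨hz3, hz4⟩ := Finset.mem_product.1 hz1
    refine ⟨hz4, ?_⟩
    have : z = (x, z.2) := by rw [← hfst]
    rwa [← this]
  · intro z hz z' hz' h
    simp only [Finset.mem_filter] at hz hz'
    exact Prod.ext (hz.2.trans hz'.2.symm) h
  · intro y hy
    simp only [Finset.mem_filter] at hy
    exact ⟨(x, y), Finset.mem_filter.2 ⟨Finset.mem_filter.2
      ⟨Finset.mem_product.2 ⟨hx, hy.1⟩, hy.2⟩, rfl⟩, rfl⟩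

/-- the cross-pair count for a block with exactly two equal classes -/
lemma card_cross4 {α β : Type*} [DecidableEq α] [DecidableEq β] (F : α → β) {p q r : α}
    (hpq : p ≠ q) (hpr : p ≠ r) (hqr : q ≠ r) (h1 : F p = F q) (h2 : F p ≠ F r) :
    (((({p, q, r} : Finset α)) ×ˢ ({p, q, r} : Finset α)).filter
      fun z => F z.1 ≠ F z.2).card = 4 := by
  have h2q : F q ≠ F r := h1 ▸ h2
  have h2s : F r ≠ F p := fun h => h2 h.symm
  have h2qs : F r ≠ F q := fun h => h2q h.symm
  have hset : ((({p, q, r} : Finset α)) ×ˢ ({p, q, r} : Finset α)).filter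
      (fun z => F z.1 ≠ F z.2) = {(p, r), (q, r), (r, p), (r, q)} := by
    ext ⟨z1, z2⟩
    simp only [Finset.mem_filter, Finset.mem_product, Finset.mem_insert,
      Finset.mem_singleton, Prod.mk.injEq]
    constructor
    · rintro ⟨⟨h3 | h3 | h3, h4 | h4 | h4⟩, h5⟩ <;> subst h3 <;> subst h4 <;> tauto
    · rintro (⟨rfl, rfl⟩ | ⟨rfl, rfl⟩ | ⟨rfl, rfl⟩ | ⟨rfl, rfl⟩) <;>
        exact ⟨⟨by tauto, by tauto⟩, by tauto⟩
  rw [hset]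
  rw [Finset.card_insert_of_notMem (by simp [Prod.ext_iff]; tauto),
    Finset.card_insert_of_notMem (by simp [Prod.ext_iff]; tauto),
    Finset.card_insert_of_notMem (by simp [Prod.ext_iff]; tauto),
    Finset.card_singleton]

/-- sum of phi over ZMod 3 -/
def phi3 : ZMod 3 → ℤ := fun c => if c = 2 then -1 else 1

lemma phi3_values (c : ZMod 3) : phi3 c = 1 ∨ phi3 c = -1 := by
  unfold phi3; split <;> simp

lemma phi3_sum : ∑ c : ZMod 3, phi3 c = 1 := by decide

end CyclicSTS9

open CyclicSTS9 in
/-- every cyclic STS(v) with v ≡ 9 (mod 18) admits a zero-sum 3-flow. -/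
theorem cyclic_sts_9_mod_18_zero_sum_3_flow (v : ℕ) [NeZero v] (hv : v % 18 = 9)
    (B : Finset (Finset (ZMod v)))
    (hcard : ∀ b ∈ B, b.card = 3)
    (hpairs : ∀ x y : ZMod v, x ≠ y → ∃! b, b ∈ B ∧ x ∈ b ∧ y ∈ b)
    (hcyc : ∀ b ∈ B, b.image (fun x => x + 1) ∈ B) :
    ∃ f : Finset (ZMod v) → ℤ,
      (∀ b ∈ B, f b = 1 ∨ f b = -1 ∨ f b = 2 ∨ f b = -2) ∧
      ∀ x : ZMod v, ∑ b ∈ B.filter (fun b => x ∈ b), f b = 0 := by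
  classical
  -- numeric facts
  have h3v : (3:ℕ) ∣ v := by omega
  set m : ℕ := v / 3 with hm_def
  have hv3 : v = 3 * m := by omega
  have hm2 : m % 2 = 1 := by omega
  have hm3 : m % 3 = 0 := by omega
  have hmpos : 0 < m := by omega
  set mu : ZMod v := (m : ZMod v) with hmu_def
  -- basic ZMod facts
  have hval : ∀ t : ZMod v, ((t.val : ℕ) : ZMod v) = t := fun t => ZMod.natCast_zmod_val t
  have hcast0 : ∀ n : ℕ, ((n : ZMod v) = 0 ↔ v ∣ n) := fun n => ZMod.natCast_eq_zero_iff n v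
  have hmu_ne : mu ≠ 0 := by
    rw [hmu_def, Ne, hcast0]
    intro hd
    have := Nat.le_of_dvd hmpos hd
    omega
  have hmu2_ne : mu + mu ≠ 0 := by
    rw [hmu_def, ← Nat.cast_add, Ne, hcast0]
    intro hd
    have := Nat.le_of_dvd (by omega) hd
    omega
  have h3mu : mu + mu + mu = 0 := by
    rw [hmu_def, ← Nat.cast_add, ← Nat.cast_add, hcast0]
    exact ⟨1, by omega⟩
  have htwo : ∀ t : ZMod v, t + t = 0 → t = 0 := by
    intro t ht
    have h1 : ((t.val + t.val : ℕ) : ZMod v) = 0 := by push_cast [hval]; exact ht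
    rw [hcast0] at h1
    have h2 : v ∣ t.val := by
      have hco : Nat.Coprime v 2 := Nat.coprime_two_right.2 (by rw [Nat.odd_iff]; omega)
      refine hco.dvd_of_dvd_mul_left ?_
      have : 2 * t.val = t.val + t.val := by ring
      rw [this]; exact h1
    have := t.val_lt
    have : t.val = 0 := by
      rcases h2 with ⟨c, hc⟩
      rcases Nat.eq_zero_or_pos c with rfl | hc0
      · omega
      · nlinarith [t.val_lt]
    rw [← hval t, this]; simp
  have hthree : ∀ t : ZMod v, t ≠ 0 → t + t + t = 0 → t = mu ∨ t = mu + mu := by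
    intro t ht h3t
    have h1 : ((t.val + t.val + t.val : ℕ) : ZMod v) = 0 := by push_cast [hval]; exact h3t
    rw [hcast0] at h1
    have h2 : ∃ c, t.val = m * c := by
      rcases h1 with ⟨c, hc⟩
      refine ⟨c, ?_⟩
      have hc' : t.val + t.val + t.val = 3 * m * c := by rw [← hv3]; exact hc
      nlinarith
    rcases h2 with ⟨c, hc⟩
    have hlt := t.val_lt
    have hc3 : c < 3 := by nlinarith
    have hc0 : c ≠ 0 := by
      rintro rfl
      apply ht
      rw [← hval t, hc]; simp
    interval_cases c
    · exact absurd rfl hc0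
    · left; rw [← hval t, hc]; simp [hmu_def]
    · right; rw [← hval t, hc, hmu_def, ← Nat.cast_add]
      congr 1
      omega
  -- closure of B under shifts
  have hBsh : ∀ b ∈ B, ∀ i : ZMod v, sh i b ∈ B := by
    have hnat : ∀ n : ℕ, ∀ b ∈ B, sh (n : ZMod v) b ∈ B := by
      intro n
      induction n with
      | zero => intro b hb; simpa [sh_zero] using hb
      | succ n ih =>
        intro b hb
        have h1 := hcyc _ (ih b hb)
        have : (sh (n : ZMod v) b).image (fun x => x + 1) = sh ((n+1 : ℕ) : ZMod v) b := by
          show sh 1 (sh (n : ZMod v) b) = _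
          rw [sh_sh]
          push_cast
          ring_nf
        rwa [this] at h1
    intro b hb i
    have := hnat i.val b hb
    rwa [hval i] at this
  -- nonstable blocks: injectivity of the orbit map
  have hstab : ∀ b : Finset (ZMod v), b.card = 3 → ∀ t : ZMod v, t ≠ 0 → sh t b = b →
      sh mu b = b := by
    intro b hb t ht hsh
    have hne : b.Nonempty := Finset.card_pos.1 (by omega)
    obtain ⟨p, hp⟩ := hne
    have hmem : ∀ y ∈ b, y + t ∈ b := by
      intro y hy
      rw [← hsh]; exact mem_sh' hy
    have hp1 : p + t ∈ b := hmem p hp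
    have hp2 : p + t + t ∈ b := hmem _ hp1
    have hp3 : p + t + t + t ∈ b := hmem _ hp2
    have h2t : t + t ≠ 0 := fun h => ht (htwo t h)
    have hd1 : p ≠ p + t := fun h => ht (by simpa using h.symm)
    have hd2 : p + t ≠ p + t + t := fun h => ht (by simpa using h.symm)
    have hd3 : p ≠ p + t + t := by
      intro h
      apply h2t
      have := h.symm
      rwa [add_assoc, add_eq_left] at this
    have hsub : ({p, p + t, p + t + t} : Finset (ZMod v)) ⊆ b := by
      intro y hy
      rcases Finset.mem_insert.1 hy with rfl | hy
      · exact hp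
      rcases Finset.mem_insert.1 hy with rfl | hy
      · exact hp1
      rw [Finset.mem_singleton.1 hy]; exact hp2
    have hcard3 : ({p, p + t, p + t + t} : Finset (ZMod v)).card = 3 := by
      rw [Finset.card_insert_of_notMem (by simp [hd1, hd3]),
        Finset.card_insert_of_notMem (by simp [hd2]), Finset.card_singleton]
    have hbeq : ({p, p + t, p + t + t} : Finset (ZMod v)) = b :=
      Finset.eq_of_subset_of_card_le hsub (by omega)
    have h3t : t + t + t = 0 := by
      have hmem3 : p + t + t + t ∈ ({p, p + t, p + t + t} : Finset (ZMod v)) := by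
        rw [hbeq]; exact hp3
      rcases Finset.mem_insert.1 hmem3 with h | h
      · linear_combination h
      rcases Finset.mem_insert.1 h with h | h
      · exact absurd (by linear_combination h) h2t
      · exact absurd (by linear_combination Finset.mem_singleton.1 h) ht
    rcases hthree t ht h3t with rfl | rfl
    · exact hsh
    · have hsh2 := congrArg (sh (mu + mu)) hsh
      rw [sh_sh, hsh] at hsh2
      have heq : mu + mu + (mu + mu) = mu := by
        have : mu + mu + (mu + mu) = mu + mu + mu + mu := by ring
        rw [this, h3mu, zero_add]
      rwa [heq] at hsh2
  have horb_inj : ∀ b : Finset (ZMod v), b.card = 3 → sh mu b ≠ b →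
      ∀ i j : ZMod v, sh i b = sh j b → i = j := by
    intro b hb hns i j hij
    by_contra hne
    apply hns
    apply hstab b hb (i - j) (sub_ne_zero.2 hne)
    have := congrArg (sh (-j)) hij
    rwa [sh_sh, sh_sh, add_neg_cancel, sh_zero, ← sub_eq_add_neg] at this
  -- stable blocks have the canonical shape
  have hstable_shape : ∀ b : Finset (ZMod v), b.card = 3 → sh mu b = b →
      ∀ x ∈ b, b = {x, x + mu, x + mu + mu} := by
    intro b hb hst x hx
    have hmem : ∀ y ∈ b, y + mu ∈ b := by
      intro y hy; rw [← hst]; exact mem_sh' hy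
    have h1 : x + mu ∈ b := hmem x hx
    have h2 : x + mu + mu ∈ b := hmem _ h1
    have hd1 : x ≠ x + mu := fun h => hmu_ne (by simpa using h.symm)
    have hd2 : x + mu ≠ x + mu + mu := fun h => hmu_ne (by simpa using h.symm)
    have hd3 : x ≠ x + mu + mu := fun h => hmu2_ne (by linear_combination h.symm)
    have hsub : ({x, x + mu, x + mu + mu} : Finset (ZMod v)) ⊆ b := by
      intro y hy
      rcases Finset.mem_insert.1 hy with rfl | hy
      · exact hx
      rcases Finset.mem_insert.1 hy with rfl | hy
      · exact h1
      rw [Finset.mem_singleton.1 hy]; exact h2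
    have hcard3 : ({x, x + mu, x + mu + mu} : Finset (ZMod v)).card = 3 := by
      rw [Finset.card_insert_of_notMem (by simp [hd1, hd3]),
        Finset.card_insert_of_notMem (by simp [hd2]), Finset.card_singleton]
    exact (Finset.eq_of_subset_of_card_le hsub (by omega)).symm
  -- uniqueness of blocks through a pair
  have huniq : ∀ b ∈ B, ∀ b' ∈ B, ∀ x y : ZMod v, x ≠ y → x ∈ b → y ∈ b → x ∈ b' → y ∈ b' →
      b = b' := by
    intro b hb b' hb' x y hxy hxb hyb hxb' hyb'
    exact ((hpairs x y hxy).unique ⟨hb, hxb, hyb⟩ ⟨hb', hxb', hyb'⟩)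
  -- replication number
  have hrep : ∀ x : ZMod v, 2 * (B.filter (fun b => x ∈ b)).card = v - 1 := by
    intro x
    set blk : ZMod v → Finset (ZMod v) := fun y =>
      if h : x ≠ y then (hpairs x y h).exists.choose else ∅ with hblk_def
    have hblk_spec : ∀ y : ZMod v, x ≠ y → blk y ∈ B ∧ x ∈ blk y ∧ y ∈ blk y := by
      intro y h
      rw [hblk_def]
      simp only []
      rw [dif_pos h]
      exact (hpairs x y h).exists.choose_spec
    have hmaps : ∀ y ∈ (univ : Finset (ZMod v)).erase x, blk y ∈ B.filter (fun b => x ∈ b) := by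
      intro y hy
      have hxy : x ≠ y := (Finset.ne_of_mem_erase hy).symm
      obtain ⟨h1, h2, h3⟩ := hblk_spec y hxy
      exact Finset.mem_filter.2 ⟨h1, h2⟩
    have hcount := Finset.card_eq_sum_card_fiberwise hmaps
    have hfiber : ∀ b ∈ B.filter (fun b => x ∈ b),
        (((univ : Finset (ZMod v)).erase x).filter (fun y => blk y = b)).card = 2 := by
      intro b hb
      obtain ⟨hbB, hxb⟩ := Finset.mem_filter.1 hb
      have : (((univ : Finset (ZMod v)).erase x).filter (fun y => blk y = b)) = b.erase x := by
        ext y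
        simp only [Finset.mem_filter, Finset.mem_erase, Finset.mem_univ, and_true, true_and]
        constructor
        · rintro ⟨hyx, rfl⟩
          exact ⟨hyx, (hblk_spec y (Ne.symm hyx)).2.2⟩
        · rintro ⟨hyx, hyb⟩
          obtain ⟨h1, h2, h3⟩ := hblk_spec y (Ne.symm hyx)
          exact ⟨hyx, huniq _ h1 _ hbB x y (Ne.symm hyx) h2 h3 hxb hyb⟩
      rw [this, Finset.card_erase_of_mem hxb, hcard b hbB]
    rw [Finset.sum_congr rfl hfiber] at hcount
    rw [Finset.sum_const, smul_eq_mul] at hcount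
    have hcu : ((univ : Finset (ZMod v)).erase x).card = v - 1 := by
      rw [Finset.card_erase_of_mem (Finset.mem_univ x), Finset.card_univ, ZMod.card]
    omega
  -- the casting hom to ZMod 3
  set c3 : ZMod v →+* ZMod 3 := ZMod.castHom h3v (ZMod 3) with hc3_def
  have hc3mu : c3 mu = 0 := by
    rw [hmu_def, map_natCast, ZMod.natCast_eq_zero_iff]
    omega
  have hfib : ∀ c : ZMod 3, ((univ : Finset (ZMod v)).filter (fun y => c3 y = c)).card = m := by
    have hshift : ∀ c : ZMod 3,
        ((univ : Finset (ZMod v)).filter (fun y => c3 y = c)).card =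
        ((univ : Finset (ZMod v)).filter (fun y => c3 y = c + 1)).card := by
      intro c
      refine Finset.card_bij (fun y _ => y + 1) ?_ ?_ ?_
      · intro y hy
        simp only [Finset.mem_filter, Finset.mem_univ, true_and] at hy ⊢
        rw [map_add, map_one, hy]
      · intro y _ y' _ h
        exact add_right_cancel h
      · intro y hy
        simp only [Finset.mem_filter, Finset.mem_univ, true_and] at hy
        refine ⟨y - 1, ?_, by ring⟩
        simp only [Finset.mem_filter, Finset.mem_univ, true_and, map_sub, map_one, hy]
        ring
    have hsum : ∑ c ∈ (univ : Finset (ZMod 3)),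
        ((univ : Finset (ZMod v)).filter (fun y => c3 y = c)).card = v := by
      rw [← Finset.card_eq_sum_card_fiberwise (fun y _ => Finset.mem_univ (c3 y))]
      rw [Finset.card_univ, ZMod.card]
    have huniv3 : (univ : Finset (ZMod 3)) = {0, 1, 2} := by decide
    rw [huniv3] at hsum
    rw [Finset.sum_insert (by decide), Finset.sum_insert (by decide),
      Finset.sum_singleton] at hsum
    have h01 := hshift 0
    have h12 := hshift 1
    norm_num at h01 h12
    have hc012 : ∀ c : ZMod 3, c = 0 ∨ c = 1 ∨ c = 2 := by decide
    intro c
    have h2' : (1 : ZMod 3) + 1 = 2 := by decide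
    rcases hc012 c with rfl | rfl | rfl <;> omega
  -- existence of a mixed block
  have hmixed : ∃ b ∈ B, (b.image c3).card = 3 := by
    by_contra hno
    push_neg at hno
    set Pb : Finset (ZMod v) → Finset (ZMod v × ZMod v) := fun b =>
      (b ×ˢ b).filter (fun z => c3 z.1 ≠ c3 z.2) with hPb_def
    set P : Finset (ZMod v × ZMod v) :=
      ((univ : Finset (ZMod v)) ×ˢ (univ : Finset (ZMod v))).filter
        (fun z => c3 z.1 ≠ c3 z.2) with hP_def
    have hPcard : P.card = v * (v - m) := by
      rw [hP_def, card_product_filter]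
      simp only []
      have hinner : ∀ x ∈ (univ : Finset (ZMod v)),
          ((univ : Finset (ZMod v)).filter (fun y => c3 x ≠ c3 y)).card = v - m := by
        intro x _
        have hsplit := Finset.card_filter_add_card_filter_not
          (s := (univ : Finset (ZMod v))) (p := fun y => c3 x ≠ c3 y)
        have hneg : ((univ : Finset (ZMod v)).filter (fun y => ¬ c3 x ≠ c3 y)) =
            ((univ : Finset (ZMod v)).filter (fun y => c3 y = c3 x)) := by
          apply Finset.filter_congr
          intro y _
          simp [not_not, eq_comm]
        rw [hneg, hfib (c3 x), Finset.card_univ, ZMod.card] at hsplit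
        omega
      rw [Finset.sum_congr rfl hinner, Finset.sum_const, smul_eq_mul,
        Finset.card_univ, ZMod.card]
    have hPeq : P = B.biUnion Pb := by
      ext z
      rw [hP_def, hPb_def]
      simp only [Finset.mem_filter, Finset.mem_product, Finset.mem_univ, true_and,
        Finset.mem_biUnion]
      constructor
      · intro hz
        have hne : z.1 ≠ z.2 := fun h => hz (by rw [h])
        obtain ⟨b, hb, h1, h2⟩ := (hpairs z.1 z.2 hne).exists
        exact ⟨b, hb, ⟨h1, h2⟩, hz⟩
      · rintro ⟨b, _, _, hz⟩
        exact hz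
    have hdisj : ∀ b ∈ B, ∀ b' ∈ B, b ≠ b' → Disjoint (Pb b) (Pb b') := by
      intro b hb b' hb' hne
      rw [Finset.disjoint_left]
      intro z hz hz'
      rw [hPb_def] at hz hz'
      simp only [Finset.mem_filter, Finset.mem_product] at hz hz'
      obtain ⟨⟨h1, h2⟩, h3⟩ := hz
      obtain ⟨⟨h1', h2'⟩, _⟩ := hz'
      have hzz : z.1 ≠ z.2 := fun h => h3 (by rw [h])
      exact hne (huniq b hb b' hb' z.1 z.2 hzz h1 h2 h1' h2')
    have h4dvd : (4:ℕ) ∣ P.card := by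
      rw [hPeq, Finset.card_biUnion hdisj]
      refine Finset.dvd_sum ?_
      intro b hb
      obtain ⟨p, q, r, hpq, hpr, hqr, rfl⟩ := Finset.card_eq_three.1 (hcard b hb)
      by_cases h1 : c3 p = c3 q
      · by_cases h2 : c3 p = c3 r
        · -- all equal: zero cross pairs
          
          have : Pb {p, q, r} = ∅ := by
            rw [hPb_def]
            rw [Finset.filter_eq_empty_iff]
            rintro ⟨z1, z2⟩ hz
            obtain ⟨hz1, hz2⟩ := Finset.mem_product.1 hz
            simp only [Finset.mem_insert, Finset.mem_singleton] at hz1 hz2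
            have hall : ∀ w : ZMod v, w = p ∨ w = q ∨ w = r → c3 w = c3 p := by
              rintro w (rfl | rfl | rfl)
              · rfl
              · exact h1.symm
              · exact h2.symm
            simp only [not_not]
            rw [hall z1 hz1, hall z2 hz2]
          rw [this]
          simp
        · rw [hPb_def]
          rw [card_cross4 c3 hpq hpr hqr h1 h2]
      · by_cases h2 : c3 p = c3 r
        · -- p ~ r, q different: use permuted set {p, r, q}
          have hperm : ({p, q, r} : Finset (ZMod v)) = {p, r, q} := by
            ext w; simp only [Finset.mem_insert, Finset.mem_singleton]; tauto
          rw [hPb_def]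
          simp only [hperm]
          rw [card_cross4 c3 hpr hpq (fun h => hqr h.symm) h2 h1]
        · by_cases h3 : c3 q = c3 r
          · have hperm : ({p, q, r} : Finset (ZMod v)) = {q, r, p} := by
              ext w; simp only [Finset.mem_insert, Finset.mem_singleton]; tauto
            rw [hPb_def]
            simp only [hperm]
            rw [card_cross4 c3 hqr (fun h => hpq h.symm) (fun h => hpr h.symm) h3
              (fun h => h1 h.symm)]
          · -- all distinct: mixed block, contradiction
            exfalso
            apply hno _ hb
            rw [Finset.image_insert, Finset.image_insert, Finset.image_singleton]
            rw [Finset.card_insert_of_notMem (by simp [h1, h2]),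
              Finset.card_insert_of_notMem (by simp [h3]), Finset.card_singleton]
    -- numeric contradiction : 4 ∣ v * (v - m) = 6 m^2 with m odd
    rw [hPcard] at h4dvd
    have hveq : v * (v - m) = 6 * (m * m) := by
      have h1 : v - m = 2 * m := by omega
      rw [h1, hv3]
      ring
    rw [hveq] at h4dvd
    obtain ⟨j, hj⟩ : ∃ j, m = 2 * j + 1 := ⟨m / 2, by omega⟩
    rw [hj] at h4dvd
    have : 6 * ((2 * j + 1) * (2 * j + 1)) = 4 * (6 * j * j + 6 * j + 1) + 2 := by ring
    rw [this] at h4dvd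
    omega
  -- transversal of nonstable orbits
  have htrans : ∃ R : Finset (Finset (ZMod v)),
      (∀ r ∈ R, r ∈ B ∧ sh mu r ≠ r) ∧
      (∀ b ∈ B, sh mu b ≠ b → ∃! r, r ∈ R ∧ ∃ i : ZMod v, sh i r = b) := by
    set Bns : Finset (Finset (ZMod v)) := B.filter (fun b => sh mu b ≠ b) with hBns_def
    have hBns_closed : ∀ b ∈ Bns, ∀ i : ZMod v, sh i b ∈ Bns := by
      intro b hb i
      obtain ⟨hbB, hbns⟩ := Finset.mem_filter.1 hb
      refine Finset.mem_filter.2 ⟨hBsh b hbB i, ?_⟩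
      intro hsti
      apply hbns
      have : sh mu (sh i b) = sh i (sh mu b) := by rw [sh_sh, sh_sh, add_comm]
      rw [this] at hsti
      exact sh_injective i hsti
    have key : ∀ n : ℕ, ∀ T : Finset (Finset (ZMod v)), T.card = n →
        (∀ b ∈ T, ∀ i : ZMod v, sh i b ∈ T) →
        ∃ R : Finset (Finset (ZMod v)), R ⊆ T ∧
          (∀ b ∈ T, ∃! r, r ∈ R ∧ ∃ i : ZMod v, sh i r = b) := by
      intro n
      induction n using Nat.strong_induction_on with
      | _ n ih =>
        intro T hTn hTcl
        rcases Finset.eq_empty_or_nonempty T with rfl | ⟨b0, hb0⟩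
        · exact ⟨∅, Finset.Subset.refl _, fun b hb => absurd hb (Finset.notMem_empty b)⟩
        · set O : Finset (Finset (ZMod v)) :=
            (univ : Finset (ZMod v)).image (fun i => sh i b0) with hO_def
          have hO_mem : ∀ b', b' ∈ O ↔ ∃ i : ZMod v, sh i b0 = b' := by
            intro b'
            rw [hO_def]
            simp [Finset.mem_image]
          have hOT : O ⊆ T := by
            intro b' hb'
            obtain ⟨i, hi⟩ := (hO_mem b').1 hb'
            rw [← hi]
            exact hTcl b0 hb0 i
          have hb0O : b0 ∈ O := (hO_mem b0).2 ⟨0, sh_zero b0⟩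
          set T' : Finset (Finset (ZMod v)) := T \ O with hT'_def
          have hT'cl : ∀ b ∈ T', ∀ i : ZMod v, sh i b ∈ T' := by
            intro b hb i
            obtain ⟨hbT, hbO⟩ := Finset.mem_sdiff.1 hb
            refine Finset.mem_sdiff.2 ⟨hTcl b hbT i, ?_⟩
            intro hmem
            apply hbO
            obtain ⟨j, hj⟩ := (hO_mem _).1 hmem
            refine (hO_mem b).2 ⟨j + (-i), ?_⟩
            have := congrArg (sh (-i)) hj
            rwa [sh_sh, sh_sh, add_neg_cancel, sh_zero] at this
          have hcardlt : T'.card < n := by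
            rw [← hTn]
            exact Finset.card_lt_card ⟨Finset.sdiff_subset,
              fun hsub => (Finset.mem_sdiff.1 (hsub (hOT hb0O))).2 hb0O⟩
          obtain ⟨R', hR'sub, hR'uniq⟩ := ih T'.card hcardlt T' rfl hT'cl
          refine ⟨insert b0 R', ?_, ?_⟩
          · intro r hr
            rcases Finset.mem_insert.1 hr with rfl | hr
            · exact hb0
            · exact (Finset.mem_sdiff.1 (hR'sub hr)).1
          · intro b hbT
            by_cases hbO : b ∈ O
            · obtain ⟨i, hi⟩ := (hO_mem b).1 hbO
              refine ⟨b0, ⟨Finset.mem_insert_self _ _, i, hi⟩, ?_⟩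
              rintro r ⟨hrR, j, hj⟩
              rcases Finset.mem_insert.1 hrR with rfl | hrR'
              · rfl
              · exfalso
                have hrT' := hR'sub hrR'
                have : r ∈ O := by
                  refine (hO_mem r).2 ⟨i + (-j), ?_⟩
                  have := congrArg (sh (-j)) (hi.trans hj.symm)
                  rwa [sh_sh, sh_sh, add_neg_cancel, sh_zero] at this
                exact (Finset.mem_sdiff.1 hrT').2 this
            · have hbT' : b ∈ T' := Finset.mem_sdiff.2 ⟨hbT, hbO⟩
              obtain ⟨r, ⟨hrR', hri⟩, hruniq⟩ := hR'uniq b hbT'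
              refine ⟨r, ⟨Finset.mem_insert_of_mem hrR', hri⟩, ?_⟩
              rintro r' ⟨hr'R, j, hj⟩
              rcases Finset.mem_insert.1 hr'R with rfl | hr'R'
              · exfalso
                apply hbO
                exact (hO_mem b).2 ⟨j, hj⟩
              · exact hruniq r' ⟨hr'R', j, hj⟩
    obtain ⟨R, hRsub, hRuniq⟩ := key Bns.card Bns rfl hBns_closed
    refine ⟨R, ?_, ?_⟩
    · intro r hr
      have := hRsub hr
      exact ⟨(Finset.mem_filter.1 this).1, (Finset.mem_filter.1 this).2⟩
    · intro b hbB hbns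
      exact hRuniq b (Finset.mem_filter.2 ⟨hbB, hbns⟩)
  obtain ⟨R, hR1, hR2⟩ := htrans
  obtain ⟨bhat, hbhatB, hbhatmix⟩ := hmixed
  have hbhat_ns : sh mu bhat ≠ bhat := by
    intro hst
    have hne : bhat.Nonempty := Finset.card_pos.1 (by rw [hcard bhat hbhatB]; norm_num)
    obtain ⟨x, hx⟩ := hne
    have := hstable_shape bhat (hcard bhat hbhatB) hst x hx
    rw [this] at hbhatmix
    have : ({x, x + mu, x + mu + mu} : Finset (ZMod v)).image c3 = {c3 x} := by
      rw [Finset.image_insert, Finset.image_insert, Finset.image_singleton]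
      simp [map_add, hc3mu]
    rw [this] at hbhatmix
    simp at hbhatmix
  obtain ⟨rstar, ⟨hrstar_R, i0, hi0⟩, -⟩ := hR2 bhat hbhatB hbhat_ns
  obtain ⟨hrstarB, hrstar_ns⟩ := hR1 rstar hrstar_R
  have hrstar_card : rstar.card = 3 := hcard rstar hrstarB
  have hrstar_mix : (rstar.image c3).card = 3 := by
    have himg : (sh i0 rstar).image c3 = (rstar.image c3).image (· + c3 i0) := by
      unfold sh
      rw [Finset.image_image, Finset.image_image]
      congr 1
      funext a
      simp [map_add]
    have : (bhat.image c3).card = (rstar.image c3).card := by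
      rw [← hi0, himg, Finset.card_image_of_injective _ (add_left_injective _)]
    omega
  -- the ± assignment on the other orbit representatives
  set R' : Finset (Finset (ZMod v)) := R.erase rstar with hR'_def
  obtain ⟨g, hg1, hgS⟩ := exists_pm_one (Finset (ZMod v)) R'
  set S : ℤ := ∑ r ∈ R', g r with hS_def
  set gval : ℤ := -1 - 3 * S with hgval_def
  -- the flow
  set f : Finset (ZMod v) → ℤ := fun b =>
    if sh mu b = b then gval
    else if h : ∃ i : ZMod v, sh i rstar = b then phi3 (c3 h.choose)
    else if h2 : ∃! r, r ∈ R' ∧ ∃ i : ZMod v, sh i r = b then g h2.exists.choose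
    else 1 with hf_def
  have hgval_cases : gval = -1 ∨ gval = 2 := by
    rcases hgS with h | h <;> rw [hgval_def, h] <;> norm_num
  have hf_stable : ∀ b : Finset (ZMod v), sh mu b = b → f b = gval := by
    intro b h; rw [hf_def]; simp [h]
  have hns_shift : ∀ r : Finset (ZMod v), sh mu r ≠ r → ∀ i : ZMod v,
      sh mu (sh i r) ≠ sh i r := by
    intro r hr i h
    apply hr
    have hc : sh mu (sh i r) = sh i (sh mu r) := by rw [sh_sh, sh_sh, add_comm]
    rw [hc] at h
    exact sh_injective i h
  have hf_star : ∀ i : ZMod v, f (sh i rstar) = phi3 (c3 i) := by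
    intro i
    have hns := hns_shift rstar hrstar_ns i
    have hex : ∃ j : ZMod v, sh j rstar = sh i rstar := ⟨i, rfl⟩
    rw [hf_def]
    simp only []
    rw [if_neg hns, dif_pos hex]
    have : hex.choose = i := horb_inj rstar hrstar_card hrstar_ns _ _ hex.choose_spec
    rw [this]
  have hf_other : ∀ r ∈ R', ∀ i : ZMod v, f (sh i r) = g r := by
    intro r hrR' i
    have hrR : r ∈ R := Finset.mem_of_mem_erase hrR'
    have hrne : r ≠ rstar := Finset.ne_of_mem_erase hrR'
    obtain ⟨hrB, hrns⟩ := hR1 r hrR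
    have hbB : sh i r ∈ B := hBsh r hrB i
    have hbns := hns_shift r hrns i
    have hnot : ¬ ∃ j : ZMod v, sh j rstar = sh i r := by
      rintro ⟨j, hj⟩
      obtain ⟨rr, -, huniq2⟩ := hR2 (sh i r) hbB hbns
      have e1 := huniq2 rstar ⟨hrstar_R, j, hj⟩
      have e2 := huniq2 r ⟨hrR, i, rfl⟩
      exact hrne (e2.trans e1.symm)
    have hex2 : ∃! rr, rr ∈ R' ∧ ∃ j : ZMod v, sh j rr = sh i r := by
      refine ⟨r, ⟨hrR', i, rfl⟩, ?_⟩
      rintro r' ⟨hr'R', j, hj⟩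
      obtain ⟨rr, -, huniq2⟩ := hR2 (sh i r) hbB hbns
      have e1 := huniq2 r' ⟨Finset.mem_of_mem_erase hr'R', j, hj⟩
      have e2 := huniq2 r ⟨hrR, i, rfl⟩
      exact e1.trans e2.symm
    rw [hf_def]
    simp only []
    rw [if_neg hbns, dif_neg hnot, dif_pos hex2]
    have := hex2.unique hex2.exists.choose_spec ⟨hrR', i, rfl⟩
    rw [this]
  refine ⟨f, ?_, ?_⟩
  · -- values
    intro b hb
    rw [hf_def]
    simp only []
    split_ifs with h1 h2 h3
    · rcases hgval_cases with h | h <;> rw [h]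
      · exact Or.inr (Or.inl rfl)
      · exact Or.inr (Or.inr (Or.inl rfl))
    · rcases phi3_values (c3 h2.choose) with h | h <;> rw [h]
      · exact Or.inl rfl
      · exact Or.inr (Or.inl rfl)
    · rcases hg1 _ h3.exists.choose_spec.1 with h | h <;> rw [h]
      · exact Or.inl rfl
      · exact Or.inr (Or.inl rfl)
    · exact Or.inl rfl
  · -- zero-sum at every point
    intro x
    set sbx : Finset (ZMod v) := {x, x + mu, x + mu + mu} with hsbx_def
    have h3x : x + mu + mu + mu = x := by
      rw [show x + mu + mu + mu = x + (mu + mu + mu) by ring, h3mu, add_zero]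
    have hsbx_stable : sh mu sbx = sbx := by
      have h1 : sh mu sbx = {x + mu, x + mu + mu, x + mu + mu + mu} := by
        rw [hsbx_def]
        unfold sh
        rw [Finset.image_insert, Finset.image_insert, Finset.image_singleton]
      rw [h1, h3x, hsbx_def]
      ext w
      simp only [Finset.mem_insert, Finset.mem_singleton]
      constructor
      · rintro (h | h | h)
        · exact Or.inr (Or.inl h)
        · exact Or.inr (Or.inr h)
        · exact Or.inl h
      · rintro (h | h | h)
        · exact Or.inr (Or.inr h)
        · exact Or.inl h
        · exact Or.inr (Or.inl h)
    have hstable_x : ∀ b ∈ B, x ∈ b → sh mu b = b → b = sbx := by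
      intro b hbB hxb hst
      rw [hsbx_def]
      exact hstable_shape b (hcard b hbB) hst x hxb
    set T : Finset (ZMod v) → Finset (Finset (ZMod v)) :=
      fun r => r.image (fun a => sh (x - a) r) with hT_def
    have hT_subBx : ∀ r ∈ R, ∀ b ∈ T r, b ∈ B.filter (fun b => x ∈ b) := by
      intro r hrR b hb
      obtain ⟨hrB, hrns⟩ := hR1 r hrR
      rw [hT_def] at hb
      obtain ⟨a, ha, rfl⟩ := Finset.mem_image.1 hb
      refine Finset.mem_filter.2 ⟨hBsh r hrB _, ?_⟩
      rw [mem_sh, sub_sub_cancel]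
      exact ha
    have hT_inj : ∀ r ∈ R, ∀ a ∈ r, ∀ a' ∈ r, sh (x - a) r = sh (x - a') r → a = a' := by
      intro r hrR a ha a' ha' h
      obtain ⟨hrB, hrns⟩ := hR1 r hrR
      have := horb_inj r (hcard r hrB) hrns _ _ h
      have h2 : x - a = x - a' := this
      have : a = a' := by linear_combination -h2
      exact this
    have hT_card : ∀ r ∈ R, (T r).card = 3 := by
      intro r hrR
      rw [hT_def]
      rw [Finset.card_image_of_injOn (fun a ha a' ha' h =>
        hT_inj r hrR a (Finset.mem_coe.1 ha) a' (Finset.mem_coe.1 ha') h)]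
      exact hcard r (hR1 r hrR).1
    have hcover : ∀ b ∈ B, x ∈ b → sh mu b ≠ b → ∃ r ∈ R, b ∈ T r := by
      intro b hbB hxb hbns
      obtain ⟨r, ⟨hrR, i, hi⟩, -⟩ := hR2 b hbB hbns
      refine ⟨r, hrR, ?_⟩
      have hxi : x - i ∈ r := by
        rw [← hi] at hxb
        exact mem_sh.1 hxb
      rw [hT_def]
      refine Finset.mem_image.2 ⟨x - i, hxi, ?_⟩
      rw [sub_sub_cancel]
      exact hi
    have hTdisjB : ∀ r ∈ R, ∀ r' ∈ R, r ≠ r' → Disjoint (T r) (T r') := by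
      intro r hrR r' hr'R hne
      rw [Finset.disjoint_left]
      intro b hb hb'
      rw [hT_def] at hb hb'
      obtain ⟨a, ha, rfl⟩ := Finset.mem_image.1 hb
      obtain ⟨a', ha', heq⟩ := Finset.mem_image.1 hb'
      obtain ⟨hrB, hrns⟩ := hR1 r hrR
      obtain ⟨hr'B, hr'ns⟩ := hR1 r' hr'R
      have hbB : sh (x - a) r ∈ B := hBsh r hrB _
      have hbns := hns_shift r hrns (x - a)
      obtain ⟨rr, -, huniq2⟩ := hR2 _ hbB hbns
      have e1 := huniq2 r ⟨hrR, x - a, rfl⟩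
      have e2 := huniq2 r' ⟨hr'R, x - a', heq⟩
      exact hne (e1.trans e2.symm)
    have hsbx_notT : ∀ r ∈ R, sbx ∉ T r := by
      intro r hrR hmem
      rw [hT_def] at hmem
      obtain ⟨a, ha, heq⟩ := Finset.mem_image.1 hmem
      obtain ⟨hrB, hrns⟩ := hR1 r hrR
      have := hns_shift r hrns (x - a)
      rw [heq] at this
      exact this hsbx_stable
    have hsbxB : sbx ∈ B := by
      by_contra hnot
      have heq : B.filter (fun b => x ∈ b) = R.biUnion T := by
        ext b
        constructor
        · intro hb
          obtain ⟨hbB, hxb⟩ := Finset.mem_filter.1 hb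
          by_cases hst : sh mu b = b
          · exfalso
            apply hnot
            rw [← hstable_x b hbB hxb hst]
            exact hbB
          · obtain ⟨r, hr, hmem⟩ := hcover b hbB hxb hst
            exact Finset.mem_biUnion.2 ⟨r, hr, hmem⟩
        · intro hb
          obtain ⟨r, hr, hmem⟩ := Finset.mem_biUnion.1 hb
          exact hT_subBx r hr b hmem
      have hcard2 := hrep x
      rw [heq, Finset.card_biUnion hTdisjB, Finset.sum_congr rfl hT_card,
        Finset.sum_const, smul_eq_mul] at hcard2
      omega
    have hnotin : sbx ∉ R.biUnion T := by
      intro h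
      obtain ⟨r, hr, hm⟩ := Finset.mem_biUnion.1 h
      exact hsbx_notT r hr hm
    have hsplit : B.filter (fun b => x ∈ b) = insert sbx (R.biUnion T) := by
      ext b
      constructor
      · intro hb
        obtain ⟨hbB, hxb⟩ := Finset.mem_filter.1 hb
        by_cases hst : sh mu b = b
        · rw [hstable_x b hbB hxb hst]
          exact Finset.mem_insert_self _ _
        · obtain ⟨r, hr, hmem⟩ := hcover b hbB hxb hst
          exact Finset.mem_insert_of_mem (Finset.mem_biUnion.2 ⟨r, hr, hmem⟩)
      · intro hb
        rcases Finset.mem_insert.1 hb with rfl | hb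
        · refine Finset.mem_filter.2 ⟨hsbxB, ?_⟩
          rw [hsbx_def]
          exact Finset.mem_insert_self _ _
        · obtain ⟨r, hr, hmem⟩ := Finset.mem_biUnion.1 hb
          exact hT_subBx r hr b hmem
    have hdisj' : Set.PairwiseDisjoint (↑R : Set (Finset (ZMod v))) T := by
      intro r hr r' hr' hne
      exact hTdisjB r (Finset.mem_coe.1 hr) r' (Finset.mem_coe.1 hr') hne
    rw [hsplit, Finset.sum_insert hnotin, Finset.sum_biUnion hdisj']
    have hRins : R = insert rstar R' := (Finset.insert_erase hrstar_R).symm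
    rw [hf_stable sbx hsbx_stable, hRins,
      Finset.sum_insert (Finset.notMem_erase rstar R)]
    -- the special orbit contributes 1
    have hsum_star : ∑ b ∈ T rstar, f b = 1 := by
      rw [hT_def]
      simp only []
      rw [Finset.sum_image (hT_inj rstar hrstar_R)]
      have hstep : ∀ a ∈ rstar, f (sh (x - a) rstar) = phi3 (c3 (x - a)) :=
        fun a _ => hf_star (x - a)
      rw [Finset.sum_congr rfl hstep]
      have hinjc : ∀ a ∈ rstar, ∀ a' ∈ rstar, c3 (x - a) = c3 (x - a') → a = a' := by
        intro a ha a' ha' h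
        have hinjOn : Set.InjOn c3 ↑rstar :=
          Finset.injOn_of_card_image_eq (by rw [hrstar_mix, hrstar_card])
        apply hinjOn (Finset.mem_coe.2 ha) (Finset.mem_coe.2 ha')
        have h2 : c3 x - c3 a = c3 x - c3 a' := by
          rw [← map_sub, ← map_sub, h]
        linear_combination -h2
      have hrw : ∑ c ∈ rstar.image (fun a => c3 (x - a)), phi3 c
          = ∑ a ∈ rstar, phi3 (c3 (x - a)) :=
        Finset.sum_image hinjc
      rw [← hrw]
      have himg : rstar.image (fun a => c3 (x - a)) = (univ : Finset (ZMod 3)) := by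
        apply Finset.eq_univ_of_card
        rw [Finset.card_image_of_injOn (fun a ha a' ha' h =>
          hinjc a (Finset.mem_coe.1 ha) a' (Finset.mem_coe.1 ha') h), hrstar_card]
        rw [ZMod.card]
      rw [himg]
      exact phi3_sum
    rw [hsum_star]
    -- the other orbits contribute 3 * g r each
    have hsum_other : ∀ r ∈ R', ∑ b ∈ T r, f b = 3 * g r := by
      intro r hr
      have hrR : r ∈ R := Finset.mem_of_mem_erase hr
      rw [hT_def]
      simp only []
      rw [Finset.sum_image (hT_inj r hrR)]
      have hstep : ∀ a ∈ r, f (sh (x - a) r) = g r := fun a _ => hf_other r hr (x - a)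
      rw [Finset.sum_congr rfl hstep, Finset.sum_const, hcard r (hR1 r hrR).1]
      rw [nsmul_eq_mul]
      norm_num
    rw [Finset.sum_congr rfl hsum_other, ← Finset.mul_sum, ← hS_def, hgval_def]
    ring
end

section
/- Every cyclic Steiner triple system STS(v) with v ≡ 3 or 15 (mod 18) and v > 3 admits a zero-sum 4-flow, i.e., an assignment of values from {±1, ±2, ±3} to the blocks such that the values of the blocks through any point sum to zero. -/
set_option linter.unusedSectionVars false

namespace ZeroSum4FlowAux

variable {v : ℕ} [NeZero v]

/-- translation of a block -/
def tr (a : ZMod v) (b : Finset (ZMod v)) : Finset (ZMod v) :=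
  b.image (fun x => x + a)

lemma tr_tr (a c : ZMod v) (b : Finset (ZMod v)) : tr a (tr c b) = tr (c + a) b := by
  unfold tr
  rw [Finset.image_image]
  apply Finset.image_congr
  intro x _
  simp [add_assoc]

lemma tr_zero (b : Finset (ZMod v)) : tr (0 : ZMod v) b = b := by simp [tr]

lemma mem_tr {x a : ZMod v} {b : Finset (ZMod v)} : x ∈ tr a b ↔ x - a ∈ b := by
  simp only [tr, Finset.mem_image]
  constructor
  · rintro ⟨y, hy, rfl⟩
    simpa using hy
  · intro h
    exact ⟨x - a, h, by ring⟩

lemma card_tr (a : ZMod v) (b : Finset (ZMod v)) : (tr a b).card = b.card :=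
  Finset.card_image_of_injective _ (add_left_injective a)

/-- the orbit of a block under translations -/
def orb (b : Finset (ZMod v)) : Finset (Finset (ZMod v)) :=
  Finset.univ.image (fun t => tr t b)

lemma mem_orb {c b : Finset (ZMod v)} : c ∈ orb b ↔ ∃ t, tr t b = c := by
  simp [orb]

lemma self_mem_orb (b : Finset (ZMod v)) : b ∈ orb b :=
  mem_orb.mpr ⟨0, tr_zero b⟩

lemma orb_tr (a : ZMod v) (b : Finset (ZMod v)) : orb (tr a b) = orb b := by
  ext c
  simp only [mem_orb]
  constructor
  · rintro ⟨t, rfl⟩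
    exact ⟨a + t, (tr_tr t a b).symm⟩
  · rintro ⟨t, rfl⟩
    refine ⟨t - a, ?_⟩
    rw [tr_tr]
    congr 1
    ring

lemma orb_eq_of_mem {c b : Finset (ZMod v)} (h : c ∈ orb b) : orb c = orb b := by
  obtain ⟨t, rfl⟩ := mem_orb.mp h
  exact orb_tr t b

lemma stab_three {b : Finset (ZMod v)} (hb : b.card = 3) {s : ZMod v}
    (hs : tr s b = b) : s + s + s = 0 := by
  have h := congrArg (fun t : Finset (ZMod v) => ∑ x ∈ t, x) hs
  simp only [tr] at h
  rw [Finset.sum_image (fun x _ y _ h => by simpa using add_right_cancel h)] at h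
  rw [Finset.sum_add_distrib, Finset.sum_const, hb] at h
  have h0 : (3 : ℕ) • s = 0 := by
    have := add_eq_left.mp h
    exact this
  rw [show (3:ℕ) = 2 + 1 from rfl, add_nsmul, two_nsmul, one_nsmul] at h0
  exact h0

/-- shortness of an orbit -/
def isShort (o : Finset (Finset (ZMod v))) : Prop :=
  ∃ b ∈ o, ∃ s, s ≠ 0 ∧ tr s b = b

lemma short_iff {b0 : Finset (ZMod v)} :
    isShort (orb b0) ↔ ∃ s, s ≠ 0 ∧ tr s b0 = b0 := by
  constructor
  · rintro ⟨b1, hb1, s, hs0, hs⟩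
    obtain ⟨t, rfl⟩ := mem_orb.mp hb1
    refine ⟨s, hs0, ?_⟩
    have h := congrArg (tr (-t)) hs
    simp only [tr_tr] at h
    rw [show t + s + -t = s by ring, show t + -t = (0:ZMod v) by ring, tr_zero] at h
    exact h
  · rintro ⟨s, hs0, hs⟩
    exact ⟨b0, self_mem_orb b0, s, hs0, hs⟩

/-- structure of a short block -/
lemma coset_struct {b : Finset (ZMod v)} (hb : b.card = 3) {s : ZMod v}
    (hs0 : s ≠ 0) (hs : tr s b = b) {y : ZMod v} (hy : y ∈ b) :
    b = {y, y + s, y + s + s} := by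
  have h3 : s + s + s = 0 := stab_three hb hs
  have h2 : s + s ≠ 0 := by
    intro h
    apply hs0
    rwa [h, zero_add] at h3
  have hmem : ∀ z ∈ b, z + s ∈ b := by
    intro z hz
    rw [← hs]
    exact mem_tr.mpr (by simpa using hz)
  have d1 : y ≠ y + s := fun h => hs0 (left_eq_add.mp h)
  have d2 : y ≠ y + s + s := fun h => h2 (left_eq_add.mp (by rwa [add_assoc] at h))
  have d3 : y + s ≠ y + s + s := fun h => hs0 (left_eq_add.mp h)
  have hsub : ({y, y + s, y + s + s} : Finset (ZMod v)) ⊆ b := by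
    intro z hz
    simp only [Finset.mem_insert, Finset.mem_singleton] at hz
    rcases hz with rfl | rfl | rfl
    · exact hy
    · exact hmem y hy
    · exact hmem _ (hmem y hy)
  have hcard3 : ({y, y + s, y + s + s} : Finset (ZMod v)).card = 3 := by
    rw [Finset.card_insert_of_notMem (by simp [d1, d2]),
      Finset.card_insert_of_notMem (by simp [d3]), Finset.card_singleton]
  exact (Finset.eq_of_subset_of_card_le hsub (by rw [hb, hcard3])).symm

lemma orbit_filter_eq (b0 : Finset (ZMod v)) (x : ZMod v) :
    (orb b0).filter (fun b => x ∈ b) =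
      (b0.image (fun y => x - y)).image (fun t => tr t b0) := by
  ext c
  simp only [Finset.mem_filter, mem_orb, Finset.mem_image, exists_exists_and_eq_and]
  constructor
  · rintro ⟨⟨t, rfl⟩, hx⟩
    refine ⟨x - t, mem_tr.mp hx, ?_⟩
    congr 1
    ring
  · rintro ⟨y, hy, rfl⟩
    refine ⟨⟨x - y, rfl⟩, mem_tr.mpr ?_⟩
    simpa using hy

lemma orbit_count_full {b0 : Finset (ZMod v)} (hb : b0.card = 3)
    (h : ¬ isShort (orb b0)) (x : ZMod v) :
    ((orb b0).filter (fun b => x ∈ b)).card = 3 := by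
  rw [orbit_filter_eq]
  have hinj : Function.Injective (fun t => tr t b0) := by
    intro t1 t2 h12
    simp only at h12
    by_contra hne
    apply h
    rw [short_iff]
    refine ⟨t1 - t2, sub_ne_zero.mpr hne, ?_⟩
    have h2 := congrArg (tr (-t2)) h12
    simp only [tr_tr] at h2
    rw [show t2 + -t2 = (0:ZMod v) by ring, tr_zero] at h2
    rw [show t1 - t2 = t1 + -t2 by ring]
    exact h2
  rw [Finset.card_image_of_injective _ hinj,
    Finset.card_image_of_injective _ sub_right_injective, hb]

lemma orbit_count_short {b0 : Finset (ZMod v)} (hb : b0.card = 3)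
    (h : isShort (orb b0)) (x : ZMod v) :
    ((orb b0).filter (fun b => x ∈ b)).card = 1 := by
  obtain ⟨s, hs0, hs⟩ := short_iff.mp h
  have hne : b0.Nonempty := Finset.card_pos.mp (by rw [hb]; norm_num)
  obtain ⟨y0, hy0⟩ := hne
  have hstruct := coset_struct hb hs0 hs hy0
  have hms : tr (-s) b0 = b0 := by
    conv_lhs => rw [← hs]
    rw [tr_tr, show s + -s = (0:ZMod v) by ring, tr_zero]
  have hmss : tr (-s + -s) b0 = b0 := by
    rw [← tr_tr, hms, hms]
  have hconst : ∀ y ∈ b0, tr (x - y) b0 = tr (x - y0) b0 := by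
    intro y hy
    rw [hstruct] at hy
    simp only [Finset.mem_insert, Finset.mem_singleton] at hy
    rcases hy with rfl | rfl | rfl
    · rfl
    · conv_rhs => rw [← hms]
      rw [tr_tr]
      congr 1
      ring
    · conv_rhs => rw [← hmss]
      rw [tr_tr]
      congr 1
      ring
  rw [orbit_filter_eq, Finset.image_image]
  have himg : b0.image ((fun t => tr t b0) ∘ (fun y => x - y)) = {tr (x - y0) b0} := by
    have e : ((fun t => tr t b0) ∘ fun y => x - y) = fun y => tr (x - y) b0 := rfl
    rw [e, Finset.image_congr (g := fun _ => tr (x - y0) b0) (fun y hy => hconst y hy)]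
    exact Finset.image_const ⟨y0, hy0⟩ _
  rw [himg, Finset.card_singleton]

lemma short_unique {b1 b2 : Finset (ZMod v)} (h1 : b1.card = 3) (h2 : b2.card = 3)
    (hs1 : isShort (orb b1)) (hs2 : isShort (orb b2)) : orb b1 = orb b2 := by
  obtain ⟨s1, hs10, hst1⟩ := short_iff.mp hs1
  obtain ⟨s2, hs20, hst2⟩ := short_iff.mp hs2
  have h31 : s1 + s1 + s1 = 0 := stab_three h1 hst1
  have h32 : s2 + s2 + s2 = 0 := stab_three h2 hst2
  have hkey : s2 = s1 ∨ s2 = s1 + s1 := by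
    have hval : ∀ s : ZMod v, s ≠ 0 → s + s + s = 0 →
        3 * s.val = v ∨ 3 * s.val = 2 * v := by
      intro s hs0' h3'
      have hcast : ((3 * s.val : ℕ) : ZMod v) = 0 := by
        push_cast
        rw [ZMod.natCast_val, ZMod.cast_id]
        linear_combination h3'
      have hdvd : v ∣ 3 * s.val := (ZMod.natCast_eq_zero_iff _ _).mp hcast
      obtain ⟨k, hk⟩ := hdvd
      have hlt : s.val < v := ZMod.val_lt s
      have hpos : 0 < s.val := Nat.pos_of_ne_zero (fun h0 => hs0' ((ZMod.val_eq_zero s).mp h0))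
      have hkle : k ≤ 2 := by
        by_contra hgt
        push_neg at hgt
        have h3k : v * 3 ≤ v * k := Nat.mul_le_mul_left v hgt
        omega
      interval_cases k <;> omega
    have hv1 := hval s1 hs10 h31
    have hv2 := hval s2 hs20 h32
    have hvpos : 0 < v := Nat.pos_of_ne_zero (NeZero.ne v)
    have hcast1 : ((s1.val : ℕ) : ZMod v) = s1 := by rw [ZMod.natCast_val, ZMod.cast_id]
    have hcast2 : ((s2.val : ℕ) : ZMod v) = s2 := by rw [ZMod.natCast_val, ZMod.cast_id]
    rcases hv1 with ha | ha <;> rcases hv2 with hb | hb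
    · left
      have : s2.val = s1.val := by omega
      rw [← hcast1, ← hcast2, this]
    · right
      have hb2 : s2.val = 2 * s1.val := by omega
      rw [← hcast1, ← hcast2, hb2]
      push_cast
      ring
    · -- s1.val = 2 * s2.val, i.e. s1 = s2 + s2, hence s2 = s1 + s1
      right
      have hb2 : s1.val = 2 * s2.val := by omega
      have hs1s2 : s1 = s2 + s2 := by
        rw [← hcast1, ← hcast2, hb2]
        push_cast
        ring
      linear_combination (-2 : ℤ) * hs1s2 - h32
    · left
      have : s2.val = s1.val := by omega
      rw [← hcast1, ← hcast2, this]
  -- now use structure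
  have hne1 : b1.Nonempty := Finset.card_pos.mp (by rw [h1]; norm_num)
  have hne2 : b2.Nonempty := Finset.card_pos.mp (by rw [h2]; norm_num)
  obtain ⟨y1, hy1⟩ := hne1
  obtain ⟨y2, hy2⟩ := hne2
  have hstruct1 := coset_struct h1 hs10 hst1 hy1
  have hstruct2 := coset_struct h2 hs20 hst2 hy2
  have hb2' : b2 = {y2, y2 + s1, y2 + s1 + s1} := by
    rcases hkey with rfl | hk
    · exact hstruct2
    · rw [hstruct2, hk]
      have e3 : y2 + (s1 + s1) + (s1 + s1) = y2 + s1 := by linear_combination h31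
      rw [e3, show y2 + (s1 + s1) = y2 + s1 + s1 from (add_assoc _ _ _).symm]
      exact congrArg (insert y2) (Finset.pair_comm _ _)
  have htr : tr (y2 - y1) b1 = b2 := by
    rw [hstruct1]
    unfold tr
    simp only [Finset.image_insert, Finset.image_singleton]
    rw [show y1 + (y2 - y1) = y2 by ring, show y1 + s1 + (y2 - y1) = y2 + s1 by ring,
      show y1 + s1 + s1 + (y2 - y1) = y2 + s1 + s1 by ring, hb2']
  rw [← htr, orb_tr]


lemma signed_sum {α : Type*} [DecidableEq α] (s : Finset α) (hs : s.Nonempty) :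
    ∃ c : α → ℤ, (∀ a ∈ s, c a = 1 ∨ c a = -1 ∨ c a = 2 ∨ c a = -2) ∧ ∑ a ∈ s, c a = 1 := by
  induction hs using Finset.Nonempty.cons_induction with
  | singleton a =>
    exact ⟨fun _ => 1, fun a _ => Or.inl rfl, by simp⟩
  | cons a t ha ht ih =>
    obtain ⟨c, hcv, hcs⟩ := ih
    refine ⟨fun x => if x = a then 2 else -(c x), ?_, ?_⟩
    · intro x hx
      rcases Finset.mem_cons.mp hx with rfl | hxt
      · simp
      · have hxa : x ≠ a := fun (h : x = a) => ha (h ▸ hxt)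
        rcases hcv x hxt with h | h | h | h <;> simp [hxa, h]
    · rw [Finset.sum_cons]
      have hrest : ∑ x ∈ t, (if x = a then (2:ℤ) else -(c x)) = ∑ x ∈ t, -(c x) :=
        Finset.sum_congr rfl (fun x hx => if_neg (fun (h : x = a) => ha (h ▸ hx)))
      rw [if_pos rfl, hrest, Finset.sum_neg_distrib, hcs]
      norm_num

end ZeroSum4FlowAux

open ZeroSum4FlowAux

/-- every cyclic STS(v) with v ≡ 3 or 15 (mod 18), v > 3, admits a
zero-sum 4-flow (values in {±1, ±2, ±3}). -/
theorem cyclic_sts_3_15_mod_18_zero_sum_4_flow (v : ℕ) [NeZero v]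
    (hv : v % 18 = 3 ∨ v % 18 = 15) (hv3 : 3 < v)
    (B : Finset (Finset (ZMod v)))
    (hcard : ∀ b ∈ B, b.card = 3)
    (hpairs : ∀ x y : ZMod v, x ≠ y → ∃! b, b ∈ B ∧ x ∈ b ∧ y ∈ b)
    (hcyc : ∀ b ∈ B, b.image (fun x => x + 1) ∈ B) :
    ∃ f : Finset (ZMod v) → ℤ,
      (∀ b ∈ B, f b ≠ 0 ∧ |f b| ≤ 3) ∧
      ∀ x : ZMod v, ∑ b ∈ B.filter (fun b => x ∈ b), f b = 0 := by
  classical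
  -- closure under all translations
  have hBn : ∀ b ∈ B, ∀ n : ℕ, tr (n : ZMod v) b ∈ B := by
    intro b hb n
    induction n with
    | zero => simpa [tr_zero] using hb
    | succ n ih =>
      have h1 := hcyc _ ih
      rw [show ((n + 1 : ℕ) : ZMod v) = (n : ZMod v) + 1 by push_cast; ring, ← tr_tr]
      exact h1
  have hB : ∀ b ∈ B, ∀ a : ZMod v, tr a b ∈ B := by
    intro b hb a
    obtain ⟨n, rfl⟩ := ZMod.natCast_zmod_surjective a
    exact hBn b hb n
  set O : Finset (Finset (Finset (ZMod v))) := B.image orb with hO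
  have horbB : ∀ o ∈ O, ∀ b ∈ o, b ∈ B ∧ orb b = o := by
    intro o ho b hbo
    obtain ⟨b0, hb0, rfl⟩ := Finset.mem_image.mp ho
    obtain ⟨t, rfl⟩ := mem_orb.mp hbo
    exact ⟨hB b0 hb0 t, orb_tr t b0⟩
  have hfilter : ∀ x : ZMod v, ∀ o ∈ O,
      (B.filter (fun b => x ∈ b)).filter (fun b => orb b = o)
        = o.filter (fun b => x ∈ b) := by
    intro x o ho
    ext b
    simp only [Finset.mem_filter]
    constructor
    · rintro ⟨⟨hbB, hxb⟩, horb⟩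
      exact ⟨horb ▸ self_mem_orb b, hxb⟩
    · rintro ⟨hbo, hxb⟩
      obtain ⟨hbB, horb⟩ := horbB o ho b hbo
      exact ⟨⟨hbB, hxb⟩, horb⟩
  have hcount : ∀ o ∈ O, ∀ x : ZMod v,
      (o.filter (fun b => x ∈ b)).card = if isShort o then 1 else 3 := by
    intro o ho x
    obtain ⟨b0, hb0, rfl⟩ := Finset.mem_image.mp ho
    by_cases hsh : isShort (orb b0)
    · rw [if_pos hsh]
      exact orbit_count_short (hcard b0 hb0) hsh x
    · rw [if_neg hsh]
      exact orbit_count_full (hcard b0 hb0) hsh x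
  -- replication number
  have hr0 : 2 * (B.filter (fun b => (0:ZMod v) ∈ b)).card = v - 1 := by
    have hbij : ((B.filter (fun b => (0:ZMod v) ∈ b)).sigma (fun b => b.erase 0)).card
        = (Finset.univ.erase (0 : ZMod v)).card := by
      apply Finset.card_bij (fun p _ => p.2)
      · rintro ⟨b, y⟩ hp
        simp only [Finset.mem_sigma, Finset.mem_filter, Finset.mem_erase] at hp
        exact Finset.mem_erase.mpr ⟨hp.2.1, Finset.mem_univ y⟩
      · rintro ⟨b1, y1⟩ hp1 ⟨b2, y2⟩ hp2 h
        simp only at h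
        subst h
        simp only [Finset.mem_sigma, Finset.mem_filter, Finset.mem_erase] at hp1 hp2
        obtain ⟨⟨hb1B, h01⟩, hy10, hy1b⟩ := hp1
        obtain ⟨⟨hb2B, h02⟩, _, hy2b⟩ := hp2
        obtain ⟨b, _, hun⟩ := hpairs 0 y1 (Ne.symm hy10)
        have e1 : b1 = b := hun b1 ⟨hb1B, h01, hy1b⟩
        have e2 : b2 = b := hun b2 ⟨hb2B, h02, hy2b⟩
        rw [e1, e2]
      · intro y hy
        have hy0 : y ≠ 0 := (Finset.mem_erase.mp hy).1
        obtain ⟨b, ⟨hbB, h0b, hyb⟩, _⟩ := hpairs 0 y (Ne.symm hy0)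
        exact ⟨⟨b, y⟩, Finset.mem_sigma.mpr ⟨Finset.mem_filter.mpr ⟨hbB, h0b⟩,
          Finset.mem_erase.mpr ⟨hy0, hyb⟩⟩, rfl⟩
    rw [Finset.card_sigma] at hbij
    have hcards : ∀ b ∈ B.filter (fun b => (0:ZMod v) ∈ b), (b.erase (0:ZMod v)).card = 2 := by
      intro b hb
      obtain ⟨hbB, h0b⟩ := Finset.mem_filter.mp hb
      rw [Finset.card_erase_of_mem h0b, hcard b hbB]
    rw [Finset.sum_congr rfl hcards, Finset.sum_const, smul_eq_mul,
      Finset.card_erase_of_mem (Finset.mem_univ 0), Finset.card_univ, ZMod.card] at hbij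
    omega
  have hmaps : ∀ x : ZMod v, ∀ b ∈ B.filter (fun b => x ∈ b), orb b ∈ O := by
    intro x b hb
    exact Finset.mem_image_of_mem orb (Finset.mem_filter.mp hb).1
  have hdecomp : (B.filter (fun b => (0:ZMod v) ∈ b)).card
      = ∑ o ∈ O, (o.filter (fun b => (0:ZMod v) ∈ b)).card := by
    rw [Finset.card_eq_sum_card_fiberwise (hmaps 0)]
    exact Finset.sum_congr rfl (fun o ho => by rw [hfilter 0 o ho])
  set Os := O.filter (fun o => isShort o) with hOs
  set Of := O.filter (fun o => ¬ isShort o) with hOf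
  have hsplit : (B.filter (fun b => (0:ZMod v) ∈ b)).card = Os.card + Of.card * 3 := by
    rw [hdecomp, ← Finset.sum_filter_add_sum_filter_not O (fun o => isShort o)]
    have h1 : ∀ o ∈ Os, (o.filter (fun b => (0:ZMod v) ∈ b)).card = 1 := by
      intro o ho
      obtain ⟨hoO, hosh⟩ := Finset.mem_filter.mp ho
      rw [hcount o hoO 0, if_pos hosh]
    have h3 : ∀ o ∈ Of, (o.filter (fun b => (0:ZMod v) ∈ b)).card = 3 := by
      intro o ho
      obtain ⟨hoO, hosh⟩ := Finset.mem_filter.mp ho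
      rw [hcount o hoO 0, if_neg hosh]
    rw [Finset.sum_congr rfl h1, Finset.sum_congr rfl h3, Finset.sum_const,
      Finset.sum_const, smul_eq_mul, smul_eq_mul, mul_one]
  have hSle : Os.card ≤ 1 := by
    apply Finset.card_le_one.mpr
    intro o1 h1' o2 h2'
    obtain ⟨ho1, hsh1⟩ := Finset.mem_filter.mp h1'
    obtain ⟨ho2, hsh2⟩ := Finset.mem_filter.mp h2'
    obtain ⟨b1, hb1, rfl⟩ := Finset.mem_image.mp ho1
    obtain ⟨b2, hb2, rfl⟩ := Finset.mem_image.mp ho2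
    exact short_unique (hcard b1 hb1) (hcard b2 hb2) hsh1 hsh2
  have harith : Os.card = 1 ∧ 1 ≤ Of.card := by
    rcases hv with h | h <;> omega
  obtain ⟨hS1, hF1⟩ := harith
  have hOfne : Of.Nonempty := Finset.card_pos.mp (by omega)
  obtain ⟨c, hcv, hcs⟩ := ZeroSum4FlowAux.signed_sum Of hOfne
  refine ⟨fun b => if isShort (orb b) then -3 else c (orb b), ?_, ?_⟩
  · intro b hb
    by_cases hsh : isShort (orb b)
    · simp only [if_pos hsh]
      norm_num
    · have hbOf : orb b ∈ Of := Finset.mem_filter.mpr ⟨Finset.mem_image_of_mem orb hb, hsh⟩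
      simp only [if_neg hsh]
      rcases hcv _ hbOf with h | h | h | h <;> rw [h] <;> norm_num
  · intro x
    rw [← Finset.sum_fiberwise_of_maps_to (hmaps x)
      (fun b => if isShort (orb b) then (-3:ℤ) else c (orb b))]
    have hterm : ∀ o ∈ O,
        (∑ b ∈ (B.filter (fun b => x ∈ b)).filter (fun b => orb b = o),
          (if isShort (orb b) then (-3:ℤ) else c (orb b)))
        = (if isShort o then (1:ℤ) else 3) * (if isShort o then (-3:ℤ) else c o) := by
      intro o ho
      rw [hfilter x o ho]
      have hcong : ∀ b ∈ o.filter (fun b => x ∈ b),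
          (if isShort (orb b) then (-3:ℤ) else c (orb b))
            = (if isShort o then (-3:ℤ) else c o) := by
        intro b hb
        rw [(horbB o ho b (Finset.mem_filter.mp hb).1).2]
      rw [Finset.sum_congr rfl hcong, Finset.sum_const, hcount o ho x]
      by_cases hsh : isShort o <;> simp [hsh]
    rw [Finset.sum_congr rfl hterm,
      ← Finset.sum_filter_add_sum_filter_not O (fun o => isShort o)]
    have hA : ∑ o ∈ Os, (if isShort o then (1:ℤ) else 3) * (if isShort o then (-3:ℤ) else c o)
        = -3 := by
      have h1 : ∀ o ∈ Os, (if isShort o then (1:ℤ) else 3) * (if isShort o then (-3:ℤ) else c o)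
          = -3 := by
        intro o ho
        have hsh := (Finset.mem_filter.mp ho).2
        simp [hsh]
      rw [Finset.sum_congr rfl h1, Finset.sum_const, hS1]
      simp
    have hBf : ∑ o ∈ Of, (if isShort o then (1:ℤ) else 3) * (if isShort o then (-3:ℤ) else c o)
        = 3 := by
      have h3 : ∀ o ∈ Of, (if isShort o then (1:ℤ) else 3) * (if isShort o then (-3:ℤ) else c o)
          = 3 * c o := by
        intro o ho
        have hsh := (Finset.mem_filter.mp ho).2
        simp [hsh]
      rw [Finset.sum_congr rfl h3, ← Finset.mul_sum, hcs, mul_one]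
    rw [hA, hBf]
    norm_num
end

section
/- Every cyclic Steiner triple system STS(v) with v > 7 admits a zero-sum 4-flow. -/
namespace STSFlow

open Finset

set_option linter.unusedSectionVars false

variable {v : ℕ} [NeZero v]

def shf (k : ZMod v) (b : Finset (ZMod v)) : Finset (ZMod v) := b.image (fun x => x + k)

lemma mem_shf {k x : ZMod v} {b : Finset (ZMod v)} : x ∈ shf k b ↔ x - k ∈ b := by
  simp only [shf, mem_image]
  constructor
  · rintro ⟨a, ha, rfl⟩; simpa using ha
  · intro h; exact ⟨x - k, h, by ring⟩

lemma shf_shf (k l : ZMod v) (b : Finset (ZMod v)) : shf k (shf l b) = shf (l + k) b := by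
  ext x; simp [mem_shf, sub_sub, add_comm]

lemma shf_zero (b : Finset (ZMod v)) : shf 0 b = b := by
  ext x; simp [mem_shf]

lemma shf_cancel {k : ZMod v} {b c : Finset (ZMod v)} (h : shf k b = shf k c) : b = c := by
  ext x
  have := congrArg (fun s => x + k ∈ s) h
  simpa [mem_shf] using this

lemma card_shf (k : ZMod v) (b : Finset (ZMod v)) : (shf k b).card = b.card :=
  Finset.card_image_of_injective _ (add_left_injective k)

def orb (b : Finset (ZMod v)) : Finset (Finset (ZMod v)) :=
  Finset.univ.image (fun k => shf k b)

lemma mem_orb {b c : Finset (ZMod v)} : c ∈ orb b ↔ ∃ k, shf k b = c := by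
  simp [orb]

lemma self_mem_orb (b : Finset (ZMod v)) : b ∈ orb b :=
  mem_orb.2 ⟨0, shf_zero b⟩

lemma orb_shf (k : ZMod v) (b : Finset (ZMod v)) : orb (shf k b) = orb b := by
  ext c
  simp only [mem_orb]
  constructor
  · rintro ⟨l, rfl⟩; exact ⟨k + l, by rw [← shf_shf]⟩
  · rintro ⟨l, rfl⟩
    exact ⟨l - k, by rw [shf_shf, add_sub_cancel]⟩

lemma orb_eq_of_mem {b c : Finset (ZMod v)} (h : c ∈ orb b) : orb c = orb b := by
  obtain ⟨k, rfl⟩ := mem_orb.1 h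
  exact orb_shf k b

noncomputable def enc : Finset (ZMod v) → ℕ :=
  fun b => (Fintype.equivFin (Finset (ZMod v)) b : ℕ)

lemma enc_injective : Function.Injective (enc (v := v)) :=
  Fin.val_injective.comp (Fintype.equivFin (Finset (ZMod v))).injective

noncomputable def repEnc (b : Finset (ZMod v)) : ℕ :=
  ((orb b).image enc).min' (Finset.Nonempty.image ⟨b, self_mem_orb b⟩ enc)

lemma repEnc_shf (k : ZMod v) (b : Finset (ZMod v)) : repEnc (shf k b) = repEnc b := by
  have h := orb_shf k b
  simp only [repEnc, h]

lemma orb_eq_of_repEnc_eq {b c : Finset (ZMod v)} (h : repEnc b = repEnc c) :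
    orb b = orb c := by
  have hb : repEnc b ∈ (orb b).image enc := Finset.min'_mem _ _
  have hc : repEnc c ∈ (orb c).image enc := Finset.min'_mem _ _
  rw [← h] at hc
  obtain ⟨b', hb', hb'e⟩ := Finset.mem_image.1 hb
  obtain ⟨c', hc', hc'e⟩ := Finset.mem_image.1 hc
  have : b' = c' := enc_injective (by rw [hb'e, hc'e])
  subst this
  rw [← orb_eq_of_mem hb', ← orb_eq_of_mem hc']

lemma sum_shf (k : ZMod v) (b : Finset (ZMod v)) :
    ∑ y ∈ shf k b, y = (∑ y ∈ b, y) + b.card • k := by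
  rw [shf, Finset.sum_image (fun x _ y _ h => add_left_injective k h)]
  rw [Finset.sum_add_distrib, Finset.sum_const]

lemma stab_torsion {k : ZMod v} {b : Finset (ZMod v)} (hc : b.card = 3)
    (h : shf k b = b) : 3 * k = 0 := by
  have := sum_shf k b
  rw [h, hc] at this
  have h2 : (3 : ℕ) • k = 0 := left_eq_add.1 this
  simpa [nsmul_eq_mul] using h2

lemma short_struct {k : ZMod v} {b : Finset (ZMod v)} (hc : b.card = 3)
    (hk : k ≠ 0) (h : shf k b = b) :
    ∃ x, b = {x, x + k, x + 2 * k} := by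
  have h3 : 3 * k = 0 := stab_torsion hc h
  have h2 : 2 * k ≠ 0 := by
    intro h2
    apply hk
    have : 3 * k - 2 * k = 0 := by rw [h3, h2, sub_zero]
    linear_combination this
  obtain ⟨x, hx⟩ := Finset.card_pos.1 (by rw [hc]; norm_num)
  have hmem : ∀ y ∈ b, y + k ∈ b := by
    intro y hy
    rw [← h, mem_shf]
    simpa using hy
  have hx1 : x + k ∈ b := hmem x hx
  have hx2 : x + 2 * k ∈ b := by
    have := hmem _ hx1
    rwa [show x + k + k = x + 2 * k by ring] at this
  have hsub : ({x, x + k, x + 2 * k} : Finset (ZMod v)) ⊆ b := by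
    intro z hz
    simp only [Finset.mem_insert, Finset.mem_singleton] at hz
    rcases hz with rfl | rfl | rfl <;> assumption
  have hcard3 : ({x, x + k, x + 2 * k} : Finset (ZMod v)).card = 3 := by
    refine Finset.card_eq_three.2 ⟨x, x + k, x + 2 * k, ?_, ?_, ?_, rfl⟩
    · intro hh; exact hk (by linear_combination -hh)
    · intro hh; exact h2 (by linear_combination -hh)
    · intro hh; exact hk (by linear_combination -hh)
  exact ⟨x, (Finset.eq_of_subset_of_card_le hsub (by rw [hc, hcard3])).symm⟩

lemma full_count {b : Finset (ZMod v)} (hc : b.card = 3)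
    (hfull : ∀ k, shf k b = b → k = 0) (x : ZMod v) :
    ((orb b).filter (fun c => x ∈ c)).card = 3 := by
  have hset : (orb b).filter (fun c => x ∈ c) = (b.image (fun e => x - e)).image (fun k => shf k b) := by
    ext c
    simp only [Finset.mem_filter, mem_orb, Finset.mem_image, exists_exists_and_eq_and]
    constructor
    · rintro ⟨⟨k, rfl⟩, hxc⟩
      exact ⟨x - k, by simpa [mem_shf] using hxc, by ring_nf⟩
    · rintro ⟨e, he, rfl⟩
      refine ⟨⟨x - e, rfl⟩, ?_⟩
      rw [mem_shf]
      simpa using he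
  rw [hset]
  have hinj : ∀ k₁ k₂ : ZMod v, shf k₁ b = shf k₂ b → k₁ = k₂ := by
    intro k₁ k₂ hkk
    have : shf (k₁ - k₂) b = b := by
      apply shf_cancel (k := k₂)
      rw [shf_shf]
      rw [show k₁ - k₂ + k₂ = k₁ by ring]
      exact hkk
    have := hfull _ this
    linear_combination this
  rw [Finset.card_image_of_injOn (fun a _ c _ h => hinj a c h)]
  rw [Finset.card_image_of_injective _ (fun a c h => by linear_combination -h), hc]

lemma tors {k z : ZMod v} (hv : 4 ≤ v) (hk : k ≠ 0) (h3k : 3 * k = 0) (h3z : 3 * z = 0) :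
    z = 0 ∨ z = k ∨ z = 2 * k := by
  have hdvd : ∀ w : ZMod v, 3 * w = 0 → v ∣ 3 * w.val := by
    intro w hw
    rw [← ZMod.natCast_eq_zero_iff]
    push_cast
    rw [ZMod.natCast_zmod_val]
    exact hw
  have ha := hdvd k h3k
  have hb := hdvd z h3z
  have hav : k.val < v := ZMod.val_lt k
  have hbv : z.val < v := ZMod.val_lt z
  have ha0 : k.val ≠ 0 := fun h => hk ((ZMod.val_eq_zero k).1 h)
  have key : z.val = 0 ∨ z.val = k.val ∨ z.val = 2 * k.val ∨ 2 * k.val = z.val + v := by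
    obtain ⟨c, hc⟩ := ha
    obtain ⟨d, hd⟩ := hb
    have hc3 : c < 3 := Nat.lt_of_mul_lt_mul_left (show v * c < v * 3 by rw [← hc]; omega)
    have hd3 : d < 3 := Nat.lt_of_mul_lt_mul_left (show v * d < v * 3 by rw [← hd]; omega)
    interval_cases c <;> interval_cases d <;> omega
  have hzval : z = ((z.val : ℕ) : ZMod v) := (ZMod.natCast_zmod_val z).symm
  have hkval : k = ((k.val : ℕ) : ZMod v) := (ZMod.natCast_zmod_val k).symm
  rcases key with h0 | hdc | h2a | h2b
  · left
    exact (ZMod.val_eq_zero z).1 h0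
  · right; left
    rw [hzval, hkval, hdc]
  · right; right
    rw [hzval, h2a]
    push_cast
    rw [ZMod.natCast_zmod_val]
  · right; right
    have h2 : ((2 * k.val : ℕ) : ZMod v) = ((z.val + v : ℕ) : ZMod v) := by rw [h2b]
    push_cast at h2
    rw [ZMod.natCast_zmod_val, ZMod.natCast_zmod_val, ZMod.natCast_self, add_zero] at h2
    exact h2.symm

lemma coset_shf {k x : ZMod v} (h3 : 3 * k = 0) :
    shf k ({x, x + k, x + 2 * k} : Finset (ZMod v)) = {x, x + k, x + 2 * k} := by
  ext z
  simp only [mem_shf, Finset.mem_insert, Finset.mem_singleton]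
  constructor
  · rintro (h | h | h)
    · right; left; linear_combination h
    · right; right; linear_combination h
    · left; linear_combination h + h3
  · rintro (h | h | h)
    · right; right; linear_combination h - h3
    · left; linear_combination h
    · right; left; linear_combination h

lemma coset_eq_shf (k x x₀ : ZMod v) :
    ({x, x + k, x + 2 * k} : Finset (ZMod v)) = shf (x - x₀) {x₀, x₀ + k, x₀ + 2 * k} := by
  ext z
  simp only [mem_shf, Finset.mem_insert, Finset.mem_singleton]
  constructor
  · rintro (h | h | h)
    · left; linear_combination h
    · right; left; linear_combination h
    · right; right; linear_combination h
  · rintro (h | h | h)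
    · left; linear_combination h
    · right; left; linear_combination h
    · right; right; linear_combination h

lemma coset_double {k y : ZMod v} (h3 : 3 * k = 0) :
    ({y, y + 2 * k, y + 2 * (2 * k)} : Finset (ZMod v)) = {y, y + k, y + 2 * k} := by
  ext z
  simp only [Finset.mem_insert, Finset.mem_singleton]
  constructor
  · rintro (h | h | h)
    · left; exact h
    · right; right; exact h
    · right; left; linear_combination h + h3
  · rintro (h | h | h)
    · left; exact h
    · right; right; linear_combination h - h3
    · right; left; exact h

lemma coset_mem_eq {k y x : ZMod v} (h3 : 3 * k = 0)
    (hx : x ∈ ({y, y + k, y + 2 * k} : Finset (ZMod v))) :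
    ({y, y + k, y + 2 * k} : Finset (ZMod v)) = {x, x + k, x + 2 * k} := by
  simp only [Finset.mem_insert, Finset.mem_singleton] at hx
  rcases hx with rfl | h | h
  · rfl
  · subst h
    ext z
    simp only [Finset.mem_insert, Finset.mem_singleton]
    constructor
    · rintro (h | h | h)
      · right; right; linear_combination h - h3
      · left; exact h
      · right; left; linear_combination h
    · rintro (h | h | h)
      · right; left; exact h
      · right; right; linear_combination h
      · left; linear_combination h + h3
  · subst h
    ext z
    simp only [Finset.mem_insert, Finset.mem_singleton]
    constructor
    · rintro (h | h | h)
      · right; left; linear_combination h - h3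
      · right; right; linear_combination h - h3
      · left; exact h
    · rintro (h | h | h)
      · right; right; exact h
      · left; linear_combination h + h3
      · right; left; linear_combination h + h3

lemma sum_idx (N : Finset ℕ) (w : ℕ → ℤ) :
    ∑ m ∈ N, w ((N.filter (fun m' => m' < m)).card) = ∑ i ∈ Finset.range N.card, w i := by
  have key : ∀ a ∈ N, ∀ b ∈ N, a < b →
      ((N.filter (fun m' => m' < a)).card) < ((N.filter (fun m' => m' < b)).card) := by
    intro a ha b hb hab
    apply Finset.card_lt_card
    rw [Finset.ssubset_iff_of_subset
      (Finset.monotone_filter_right N (fun x _ (hx : x < a) => lt_trans hx hab))]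
    exact ⟨a, Finset.mem_filter.2 ⟨ha, hab⟩, fun hmem => by
      simpa using (Finset.mem_filter.1 hmem).2⟩
  have hmaps : ∀ m (hm : m ∈ N), (N.filter (fun m' => m' < m)).card ∈ Finset.range N.card := by
    intro m hm
    rw [Finset.mem_range]
    apply Finset.card_lt_card
    rw [Finset.ssubset_iff_of_subset (Finset.filter_subset _ _)]
    exact ⟨m, hm, fun hmem => by simpa using (Finset.mem_filter.1 hmem).2⟩
  have hinj : ∀ a₁ (ha₁ : a₁ ∈ N), ∀ a₂ (ha₂ : a₂ ∈ N),
      (N.filter (fun m' => m' < a₁)).card = (N.filter (fun m' => m' < a₂)).card → a₁ = a₂ := by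
    intro a₁ ha₁ a₂ ha₂ h
    rcases lt_trichotomy a₁ a₂ with hlt | heq | hgt
    · exact absurd h (Nat.ne_of_lt (key _ ha₁ _ ha₂ hlt))
    · exact heq
    · exact absurd h.symm (Nat.ne_of_lt (key _ ha₂ _ ha₁ hgt))
  have hsurj := Finset.surj_on_of_inj_on_of_card_le
    (s := N) (t := Finset.range N.card)
    (fun m hm => (N.filter (fun m' => m' < m)).card) hmaps
    (fun a₁ a₂ h₁ h₂ h => hinj a₁ h₁ a₂ h₂ h) (by rw [Finset.card_range])
  refine Finset.sum_bij (fun m hm => (N.filter (fun m' => m' < m)).card) hmaps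
    (fun a₁ h₁ a₂ h₂ h => hinj a₁ h₁ a₂ h₂ h) ?_ (fun a ha => rfl)
  intro b hb
  obtain ⟨a, ha, hab⟩ := hsurj b hb
  exact ⟨a, ha, hab.symm⟩

end STSFlow


/-- every cyclic STS(v) with v > 7 admits a zero-sum 4-flow. -/
theorem cyclic_sts_zero_sum_4_flow (v : ℕ) [NeZero v] (hv : 7 < v)
    (B : Finset (Finset (ZMod v)))
    (hcard : ∀ b ∈ B, b.card = 3)
    (hpairs : ∀ x y : ZMod v, x ≠ y → ∃! b, b ∈ B ∧ x ∈ b ∧ y ∈ b)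
    (hcyc : ∀ b ∈ B, b.image (fun x => x + 1) ∈ B) :
    ∃ f : Finset (ZMod v) → ℤ,
      (∀ b ∈ B, f b ≠ 0 ∧ |f b| ≤ 3) ∧
      ∀ x : ZMod v, ∑ b ∈ B.filter (fun b => x ∈ b), f b = 0 := by
  classical
  have hv8 : 8 ≤ v := hv
  open Finset STSFlow in
  have h01 : (0 : ZMod v) ≠ 1 := by
    intro h
    have h1 : ((1 : ℕ) : ZMod v) = 0 := by exact_mod_cast h.symm
    rw [ZMod.natCast_eq_zero_iff] at h1
    have := Nat.le_of_dvd one_pos h1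
    omega
  have h3ne : ((3 : ℕ) : ZMod v) ≠ 0 := by
    intro h
    rw [ZMod.natCast_eq_zero_iff] at h
    have := Nat.le_of_dvd (by norm_num) h
    omega
  set P : Finset (ZMod v) → Prop := fun b => ∃ k : ZMod v, k ≠ 0 ∧ STSFlow.shf k b = b with hP
  set S := B.filter (fun b => P b) with hSdef
  set F := B.filter (fun b => ¬ P b) with hFdef
  have hBc : ∀ b ∈ B, ∀ k : ZMod v, STSFlow.shf k b ∈ B := by
    have hnat : ∀ (m : ℕ) (b : Finset (ZMod v)), b ∈ B → STSFlow.shf (m : ZMod v) b ∈ B := by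
      intro m
      induction m with
      | zero => intro b hb; simpa [STSFlow.shf_zero] using hb
      | succ m ih =>
        intro b hb
        have h1 := hcyc _ (ih b hb)
        have heq : STSFlow.shf ((m + 1 : ℕ) : ZMod v) b
            = STSFlow.shf 1 (STSFlow.shf (m : ZMod v) b) := by
          rw [STSFlow.shf_shf]
          congr 1
          push_cast
          ring
        rw [heq]
        exact h1
    intro b hb k
    have := hnat k.val b hb
    rwa [ZMod.natCast_zmod_val] at this
  have hPshf : ∀ (b : Finset (ZMod v)) (k : ZMod v), P (STSFlow.shf k b) → P b := by
    rintro b k ⟨m, hm0, hm⟩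
    refine ⟨m, hm0, STSFlow.shf_cancel (k := k) ?_⟩
    rw [STSFlow.shf_shf, add_comm m k, ← STSFlow.shf_shf]
    exact hm
  have hFc : ∀ b ∈ F, ∀ k : ZMod v, STSFlow.shf k b ∈ F := by
    intro b hb k
    rw [hFdef, Finset.mem_filter] at hb ⊢
    exact ⟨hBc b hb.1 k, fun hp => hb.2 (hPshf b k hp)⟩
  set N := F.image STSFlow.repEnc with hNdef
  set n := N.card with hndef
  have hSstruct : S.Nonempty → ∃ k₀ : ZMod v, k₀ ≠ 0 ∧ 3 * k₀ = 0 ∧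
      ∀ x : ZMod v, S.filter (fun b => x ∈ b)
        = {({x, x + k₀, x + 2 * k₀} : Finset (ZMod v))} := by
    rintro ⟨b₀, hb₀S⟩
    rw [hSdef, Finset.mem_filter] at hb₀S
    obtain ⟨hb₀B, k₀, hk₀, hsk₀⟩ := hb₀S
    have h3k₀ : 3 * k₀ = 0 := STSFlow.stab_torsion (hcard _ hb₀B) hsk₀
    obtain ⟨x₀, hb₀eq⟩ := STSFlow.short_struct (hcard _ hb₀B) hk₀ hsk₀
    refine ⟨k₀, hk₀, h3k₀, fun x => ?_⟩
    apply Finset.eq_singleton_iff_unique_mem.2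
    constructor
    · refine Finset.mem_filter.2 ⟨Finset.mem_filter.2 ⟨?_, ?_⟩, Finset.mem_insert_self _ _⟩
      · rw [STSFlow.coset_eq_shf k₀ x x₀, ← hb₀eq]
        exact hBc _ hb₀B _
      · exact ⟨k₀, hk₀, STSFlow.coset_shf h3k₀⟩
    · rintro c hc
      obtain ⟨hcS, hxc⟩ := Finset.mem_filter.1 hc
      rw [hSdef, Finset.mem_filter] at hcS
      obtain ⟨hcB, k', hk', hsk'⟩ := hcS
      have h3k' : 3 * k' = 0 := STSFlow.stab_torsion (hcard _ hcB) hsk'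
      obtain ⟨y, hceq⟩ := STSFlow.short_struct (hcard _ hcB) hk' hsk'
      have hcy : c = {y, y + k₀, y + 2 * k₀} := by
        rcases STSFlow.tors (by omega) hk₀ h3k₀ h3k' with h | h | h
        · exact absurd h hk'
        · rw [hceq, h]
        · rw [hceq, h, STSFlow.coset_double h3k₀]
      rw [hcy] at hxc
      rw [hcy]
      exact STSFlow.coset_mem_eq h3k₀ hxc
  have hBne : B.Nonempty := by
    obtain ⟨b, hb, -⟩ := hpairs 0 1 h01
    exact ⟨b, hb.1⟩
  have hFne : F.Nonempty := by
    by_cases hSne : S.Nonempty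
    · by_contra hFe
      rw [Finset.not_nonempty_iff_eq_empty] at hFe
      obtain ⟨k₀, hk₀, h3k₀, hSfil⟩ := hSstruct hSne
      obtain ⟨b, ⟨hbB, h0b, h1b⟩, -⟩ := hpairs 0 1 h01
      have hbS : b ∈ S := by
        by_contra hbS
        have hbF : b ∈ F := by
          rw [hFdef, Finset.mem_filter]
          exact ⟨hbB, fun hPb => hbS (by rw [hSdef, Finset.mem_filter]; exact ⟨hbB, hPb⟩)⟩
        rw [hFe] at hbF
        exact absurd hbF (Finset.notMem_empty b)
      have hmem : b ∈ S.filter (fun c => (0 : ZMod v) ∈ c) := Finset.mem_filter.2 ⟨hbS, h0b⟩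
      rw [hSfil 0] at hmem
      have hbeq := Finset.mem_singleton.1 hmem
      rw [hbeq] at h1b
      simp only [Finset.mem_insert, Finset.mem_singleton, zero_add] at h1b
      rcases h1b with h | h | h
      · exact h01 h.symm
      · exact h3ne (by push_cast; linear_combination 3 * h + h3k₀)
      · exact h3ne (by push_cast; linear_combination 3 * h + 2 * h3k₀)
    · rw [Finset.not_nonempty_iff_eq_empty] at hSne
      obtain ⟨b, hbB⟩ := hBne
      refine ⟨b, ?_⟩
      rw [hFdef, Finset.mem_filter]
      refine ⟨hbB, fun hPb => ?_⟩
      have hb : b ∈ S := by rw [hSdef, Finset.mem_filter]; exact ⟨hbB, hPb⟩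
      rw [hSne] at hb
      exact absurd hb (Finset.notMem_empty b)
  have hNne : N.Nonempty := hFne.image _
  have hn1 : 1 ≤ n := by rw [hndef]; exact Finset.card_pos.2 hNne
  have hfiber : ∀ (x : ZMod v), ∀ m ∈ N,
      ((F.filter (fun b => x ∈ b)).filter (fun b => STSFlow.repEnc b = m)).card = 3 := by
    intro x m hm
    rw [hNdef] at hm
    obtain ⟨b₁, hb₁F, rfl⟩ := Finset.mem_image.1 hm
    have hb₁B : b₁ ∈ B := (Finset.mem_filter.1 hb₁F).1
    have hb₁P : ¬ P b₁ := (Finset.mem_filter.1 hb₁F).2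
    have hfull : ∀ k : ZMod v, STSFlow.shf k b₁ = b₁ → k = 0 := by
      intro k hk
      by_contra hk0
      exact hb₁P ⟨k, hk0, hk⟩
    have hset : (F.filter (fun b => x ∈ b)).filter (fun b => STSFlow.repEnc b = STSFlow.repEnc b₁)
        = (STSFlow.orb b₁).filter (fun c => x ∈ c) := by
      ext c
      simp only [Finset.mem_filter]
      constructor
      · rintro ⟨⟨hcF, hxc⟩, hrep⟩
        have horb := STSFlow.orb_eq_of_repEnc_eq hrep
        exact ⟨by rw [← horb]; exact STSFlow.self_mem_orb c, hxc⟩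
      · rintro ⟨hcorb, hxc⟩
        obtain ⟨k, rfl⟩ := STSFlow.mem_orb.1 hcorb
        exact ⟨⟨hFc _ hb₁F k, hxc⟩, STSFlow.repEnc_shf k b₁⟩
    rw [hset]
    exact STSFlow.full_count (hcard _ hb₁B) hfull x
  have hn1' : S = ∅ → n ≠ 1 := by
    intro hSe hne1
    have hPB : ∀ b ∈ B, ¬ P b := by
      intro b hb hPb
      have hbS : b ∈ S := by rw [hSdef, Finset.mem_filter]; exact ⟨hb, hPb⟩
      rw [hSe] at hbS
      exact absurd hbS (Finset.notMem_empty b)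
    have hBFeq : F = B := by
      rw [hFdef]
      exact Finset.filter_true_of_mem hPB
    have hNcard : N.card = 1 := by rw [← hndef]; exact hne1
    obtain ⟨m, hm⟩ := Finset.card_eq_one.1 hNcard
    have hmN : m ∈ N := by rw [hm]; exact Finset.mem_singleton_self m
    have hrepall : ∀ b ∈ F, STSFlow.repEnc b = m := by
      intro b hb
      have hb2 : STSFlow.repEnc b ∈ N := by
        rw [hNdef]; exact Finset.mem_image_of_mem _ hb
      rw [hm] at hb2
      exact Finset.mem_singleton.1 hb2
    have hcount : (B.filter (fun b => (0 : ZMod v) ∈ b)).card = 3 := by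
      have heq : B.filter (fun b => (0 : ZMod v) ∈ b)
          = (F.filter (fun b => (0 : ZMod v) ∈ b)).filter (fun b => STSFlow.repEnc b = m) := by
        ext c
        simp only [Finset.mem_filter]
        constructor
        · rintro ⟨hcB, hxc⟩
          have hcF : c ∈ F := by rw [hBFeq]; exact hcB
          exact ⟨⟨hcF, hxc⟩, hrepall c hcF⟩
        · rintro ⟨⟨hcF, hxc⟩, -⟩
          rw [hBFeq] at hcF
          exact ⟨hcF, hxc⟩
      rw [heq]
      exact hfiber 0 m hmN
    have hsub : Finset.univ.erase (0 : ZMod v) ⊆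
        (B.filter (fun b => (0 : ZMod v) ∈ b)).biUnion (fun b => b.erase 0) := by
      intro y hy
      have hy0 : y ≠ 0 := (Finset.mem_erase.1 hy).1
      obtain ⟨b, ⟨hbB, h0b, hyb⟩, -⟩ := hpairs 0 y (Ne.symm hy0)
      exact Finset.mem_biUnion.2 ⟨b, Finset.mem_filter.2 ⟨hbB, h0b⟩,
        Finset.mem_erase.2 ⟨hy0, hyb⟩⟩
    have h1 := Finset.card_le_card hsub
    have h2 := Finset.card_biUnion_le (s := B.filter (fun b => (0 : ZMod v) ∈ b))
      (t := fun b => b.erase (0 : ZMod v))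
    have h3 : ∑ b ∈ B.filter (fun b => (0 : ZMod v) ∈ b), (b.erase (0 : ZMod v)).card
        ≤ ∑ _b ∈ B.filter (fun b => (0 : ZMod v) ∈ b), 2 := by
      apply Finset.sum_le_sum
      intro b hb
      obtain ⟨hbB, h0b⟩ := Finset.mem_filter.1 hb
      rw [Finset.card_erase_of_mem h0b, hcard _ hbB]
    rw [Finset.sum_const, hcount] at h3
    have h4 : (Finset.univ.erase (0 : ZMod v)).card = v - 1 := by
      rw [Finset.card_erase_of_mem (Finset.mem_univ _), Finset.card_univ, ZMod.card]
    rw [h4] at h1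
    simp only [smul_eq_mul] at h3
    omega
  have hn2 : ¬ S.Nonempty → 2 ≤ n := by
    intro hSne
    rw [Finset.not_nonempty_iff_eq_empty] at hSne
    have := hn1' hSne
    omega
  set δ : ℕ → ℤ := fun i =>
    if S.Nonempty then (if Even n then (if i = 0 then 1 else 0) else 0)
    else (if Even n then 0 else (if i = 1 then -1 else 0)) with hδ
  set w : ℕ → ℤ := fun i => (-1) ^ i + δ i with hwdef
  refine ⟨fun b => if P b then -3
    else w ((N.filter (fun m' => m' < STSFlow.repEnc b)).card), ?_, ?_⟩
  · intro b hb
    by_cases hPb : P b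
    · simp only [if_pos hPb]
      norm_num
    · simp only [if_neg hPb]
      have hwvals : ∀ i, w i = 1 ∨ w i = -1 ∨ w i = 2 ∨ w i = -2 := by
        intro i
        simp only [hwdef, hδ]
        rcases Nat.even_or_odd i with hi | hi
        · rw [hi.neg_one_pow]
          have h1 : i ≠ 1 := by
            intro h
            rw [h] at hi
            exact (Nat.not_even_iff_odd.2 odd_one) hi
          split_ifs <;> norm_num
        · rw [hi.neg_one_pow]
          have h0 : i ≠ 0 := by
            intro h
            rw [h] at hi
            simpa using hi
          split_ifs <;> first | norm_num | (exfalso; omega)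
      rcases hwvals ((N.filter (fun m' => m' < STSFlow.repEnc b)).card) with h | h | h | h <;>
        rw [h] <;> norm_num
  · intro x
    rw [← Finset.sum_filter_add_sum_filter_not (B.filter (fun b => x ∈ b)) P]
    have e1 : (B.filter (fun b => x ∈ b)).filter (fun b => P b)
        = S.filter (fun b => x ∈ b) := by
      rw [hSdef]
      exact Finset.filter_comm _ _ _
    have e2 : (B.filter (fun b => x ∈ b)).filter (fun b => ¬ P b)
        = F.filter (fun b => x ∈ b) := by
      rw [hFdef]
      exact Finset.filter_comm _ _ _
    rw [e1, e2]
    have hSsum : ∑ b ∈ S.filter (fun b => x ∈ b),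
        (if P b then (-3 : ℤ) else w ((N.filter (fun m' => m' < STSFlow.repEnc b)).card))
        = if S.Nonempty then -3 else 0 := by
      by_cases hSne : S.Nonempty
      · obtain ⟨k₀, hk₀, h3k₀, hSfil⟩ := hSstruct hSne
        rw [hSfil x, if_pos hSne, Finset.sum_singleton,
          if_pos (⟨k₀, hk₀, STSFlow.coset_shf h3k₀⟩ : P _)]
      · rw [if_neg hSne]
        rw [Finset.not_nonempty_iff_eq_empty] at hSne
        rw [hSne, Finset.filter_empty, Finset.sum_empty]
    have hFsum : ∑ b ∈ F.filter (fun b => x ∈ b),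
        (if P b then (-3 : ℤ) else w ((N.filter (fun m' => m' < STSFlow.repEnc b)).card))
        = 3 * ∑ m ∈ N, w ((N.filter (fun m' => m' < m)).card) := by
      have hcongr : ∀ b ∈ F.filter (fun b => x ∈ b),
          (if P b then (-3 : ℤ) else w ((N.filter (fun m' => m' < STSFlow.repEnc b)).card))
          = w ((N.filter (fun m' => m' < STSFlow.repEnc b)).card) := by
        intro b hb
        rw [if_neg (Finset.mem_filter.1 (Finset.mem_filter.1 hb).1).2]
      rw [Finset.sum_congr rfl hcongr]
      rw [← Finset.sum_fiberwise_of_maps_to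
        (g := fun b => STSFlow.repEnc b) (t := N)
        (fun b hb => by rw [hNdef]; exact Finset.mem_image_of_mem _ (Finset.mem_filter.1 hb).1)
        (fun b => w ((N.filter (fun m' => m' < STSFlow.repEnc b)).card))]
      rw [Finset.mul_sum]
      apply Finset.sum_congr rfl
      intro m hm
      have hconst : ∀ b ∈ (F.filter (fun b => x ∈ b)).filter (fun b => STSFlow.repEnc b = m),
          w ((N.filter (fun m' => m' < STSFlow.repEnc b)).card)
          = w ((N.filter (fun m' => m' < m)).card) := by
        intro b hb
        rw [(Finset.mem_filter.1 hb).2]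
      rw [Finset.sum_congr rfl hconst, Finset.sum_const, hfiber x m hm]
      push_cast
      ring
    rw [hSsum, hFsum]
    have hNsum : ∑ m ∈ N, w ((N.filter (fun m' => m' < m)).card)
        = ∑ i ∈ Finset.range n, w i := by
      rw [hndef]
      exact STSFlow.sum_idx N w
    rw [hNsum]
    have hwsum : ∑ i ∈ Finset.range n, w i
        = (if Even n then 0 else 1)
          + (if S.Nonempty then (if Even n then (1 : ℤ) else 0)
            else (if Even n then 0 else -1)) := by
      simp only [hwdef, hδ]
      rw [Finset.sum_add_distrib, neg_one_geom_sum]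
      congr 1
      by_cases hSne : S.Nonempty <;> by_cases hEn : Even n <;>
        simp only [hSne, hEn, if_true, if_false]
      · rw [Finset.sum_ite_eq' (Finset.range n) 0 (fun _ => (1 : ℤ))]
        rw [if_pos (Finset.mem_range.2 (by omega))]
      · simp
      · simp
      · rw [Finset.sum_ite_eq' (Finset.range n) 1 (fun _ => (-1 : ℤ))]
        rw [if_pos (Finset.mem_range.2 (by have := hn2 hSne; omega))]
    rw [hwsum]
    by_cases hSne : S.Nonempty <;> by_cases hEn : Even n <;>
      simp only [hSne, hEn, if_true, if_false] <;> ring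
end

section
/- Let n ≥ 3. The complete bipartite graph K_{n,n} admits a 1-factorization into n perfect matchings together with an assignment of values from {±1, ±2} to its edges such that the values at every vertex sum to zero and the values within each perfect matching sum to zero. If moreover n is even and n ≠ 6, the values can be taken from {±1}. -/
open Finset

private lemma sum_alt_Ico' (a c : ℕ) : ∑ t ∈ Finset.Ico a (a + 2*c), (-1:ℤ)^t = 0 := by
  induction c with
  | zero => simp
  | succ c ih =>
    have h1 : a + 2*(c+1) = (a + 2*c) + 1 + 1 := by ring
    rw [h1, Finset.sum_Ico_succ_top (by omega), Finset.sum_Ico_succ_top (by omega), ih,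
      pow_succ]
    ring

private lemma sum_alt' (c : ℕ) : ∑ t ∈ Finset.range (2*c), (-1:ℤ)^t = 0 := by
  have h := sum_alt_Ico' 0 c
  rw [zero_add] at h
  rwa [Finset.range_eq_Ico]

private lemma odd_case (n : ℕ) (hn : 3 ≤ n) (hodd : Odd n) :
    ∃ (M : Fin n → Fin n → Fin n) (f : Fin n × Fin n → ℤ),
      (∀ k, Function.Bijective (M k)) ∧
      (∀ i j, ∃! k, M k i = j) ∧
      (∀ p, f p = 1 ∨ f p = -1 ∨ f p = 2 ∨ f p = -2) ∧
      (∀ i, ∑ j, f (i, j) = 0) ∧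
      (∀ j, ∑ i, f (i, j) = 0) ∧
      (∀ k, ∑ i, f (i, M k i) = 0) := by
  haveI : NeZero n := ⟨by omega⟩
  set e : ℕ := n / 2 with he
  have hne : n = 2*e + 1 := by
    rcases hodd with ⟨t, ht⟩; omega
  have he1 : 1 ≤ e := by omega
  set g : Fin n → ℤ := fun t => if t.val = 0 then 2 else if t.val < e then 1 else -1 with hg
  have hsumg : ∑ t : Fin n, g t = 0 := by
    have h0 : ∑ t : Fin n, g t
        = ∑ t ∈ Finset.range n, (if t = 0 then (2:ℤ) else if t < e then 1 else -1) :=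
      Fin.sum_univ_eq_sum_range (fun t => if t = 0 then (7:ℤ)-5 else if t < e then 1 else -1) n
    rw [h0, Finset.range_eq_Ico, ← Finset.sum_Ico_consecutive _ (by omega : 0 ≤ e) (by omega : e ≤ n),
      ← Finset.sum_Ico_consecutive _ (by omega : 0 ≤ 1) (by omega : 1 ≤ e)]
    have s1 : ∑ t ∈ Finset.Ico 0 1, (if t = 0 then (2:ℤ) else if t < e then 1 else -1) = 2 := by
      simp
    have s2 : ∑ t ∈ Finset.Ico 1 e, (if t = 0 then (2:ℤ) else if t < e then 1 else -1)
        = (e - 1 : ℕ) := by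
      rw [Finset.sum_congr rfl (fun t ht => ?_), Finset.sum_const, Nat.card_Ico, nsmul_eq_mul,
        mul_one]
      · simp only [Finset.mem_Ico] at ht
        rw [if_neg (by omega), if_pos (by omega)]
    have s3 : ∑ t ∈ Finset.Ico e n, (if t = 0 then (2:ℤ) else if t < e then 1 else -1)
        = -((n - e : ℕ) : ℤ) := by
      rw [Finset.sum_congr rfl (fun t ht => ?_), Finset.sum_const, Nat.card_Ico, nsmul_eq_mul,
        mul_neg_one]
      · simp only [Finset.mem_Ico] at ht
        rw [if_neg (by omega), if_neg (by omega)]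
    rw [s1, s2, s3]
    omega
  have hgval : ∀ t, g t = 1 ∨ g t = -1 ∨ g t = 2 ∨ g t = -2 := by
    intro t
    by_cases h1 : t.val = 0
    · right; right; left; rw [hg]; dsimp only; rw [if_pos h1]
    · by_cases h2 : t.val < e
      · left; rw [hg]; dsimp only; rw [if_neg h1, if_pos h2]
      · right; left; rw [hg]; dsimp only; rw [if_neg h1, if_neg h2]
  have hdbl : Function.Bijective (fun i : Fin n => i + i) := by
    rw [Fintype.bijective_iff_injective_and_card]
    refine ⟨fun a b hab => ?_, rfl⟩
    have h1 : (a.val + a.val) % n = (b.val + b.val) % n := by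
      have h2 := congrArg Fin.val hab
      simpa [Fin.add_def] using h2
    have hco : Nat.gcd n 2 = 1 := by
      exact (Nat.coprime_two_left.mpr hodd).symm
    have h5 : 2 * a.val ≡ 2 * b.val [MOD n] := by
      show (2*a.val) % n = (2*b.val) % n
      have : 2*a.val = a.val + a.val := by ring
      rw [this, (by ring : 2*b.val = b.val + b.val)]
      exact h1
    have h6 := h5.cancel_left_of_coprime hco
    have h7 : a.val % n = b.val % n := h6
    rw [Nat.mod_eq_of_lt a.isLt, Nat.mod_eq_of_lt b.isLt] at h7
    exact Fin.ext h7
  refine ⟨fun k i => i + k, fun p => g (p.2 - p.1 - p.1), ?_, ?_, fun p => hgval _, ?_, ?_, ?_⟩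
  · exact fun k => (Equiv.addRight k).bijective
  · intro i j
    refine ⟨j - i, show i + (j - i) = j by rw [add_comm, sub_add_cancel], fun k hk => ?_⟩
    have h : k + i = j := by rw [add_comm]; exact hk
    exact eq_sub_of_add_eq h
  · intro i
    have h1 : ∀ j : Fin n, (j : Fin n) - i - i = j - (i + i) := fun j => by rw [sub_sub]
    calc ∑ j : Fin n, g (j - i - i) = ∑ j : Fin n, g (j - (i+i)) := by
          exact Finset.sum_congr rfl (fun j _ => by rw [h1])
      _ = ∑ j : Fin n, g j :=
          Fintype.sum_equiv (Equiv.subRight (i+i)) _ _ (fun j => rfl)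
      _ = 0 := hsumg
  · intro j
    let E : Fin n ≃ Fin n := Equiv.ofBijective _ hdbl
    calc ∑ i : Fin n, g (j - i - i) = ∑ i : Fin n, g (j - E i) := by
          refine Finset.sum_congr rfl (fun i _ => ?_)
          have h2 : E i = i + i := rfl
          rw [h2, ← sub_sub]
      _ = ∑ x : Fin n, g (j - x) := Fintype.sum_equiv E _ _ (fun i => rfl)
      _ = ∑ x : Fin n, g x := Fintype.sum_equiv (Equiv.subLeft j) _ _ (fun x => rfl)
      _ = 0 := hsumg
  · intro k
    calc ∑ i : Fin n, g (i + k - i - i) = ∑ i : Fin n, g (k - i) := by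
          refine Finset.sum_congr rfl (fun i _ => ?_)
          rw [add_comm i k, add_sub_cancel_right]
      _ = ∑ x : Fin n, g x := Fintype.sum_equiv (Equiv.subLeft k) _ _ (fun x => rfl)
      _ = 0 := hsumg

section EvenCase

set_option maxHeartbeats 2000000

variable (m : ℕ)

private lemma even_case (hm : 2 ≤ m) :
    ∃ (M : Fin (2*m) → Fin (2*m) → Fin (2*m)) (f : Fin (2*m) × Fin (2*m) → ℤ),
      (∀ k, Function.Bijective (M k)) ∧
      (∀ i j, ∃! k, M k i = j) ∧
      (∀ p, f p = 1 ∨ f p = -1) ∧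
      (∀ i, ∑ j, f (i, j) = 0) ∧
      (∀ j, ∑ i, f (i, j) = 0) ∧
      (∀ k, ∑ i, f (i, M k i) = 0) := by
  haveI : NeZero (2*m) := ⟨by omega⟩
  set n : ℕ := 2*m with hn
  have hmn : m < n := by omega
  set i1 : Fin n := ⟨m, hmn⟩ with hi1
  have hi1v : i1.val = m := rfl
  have h0v : (0 : Fin n).val = 0 := rfl
  have hvadd : ∀ x y : Fin n, (x + y).val = (x.val + y.val) % n := by
    intro x y; rw [Fin.add_def]
  have hvadd2 : ∀ x y : Fin n, (x + y).val =
      if x.val + y.val < n then x.val + y.val else x.val + y.val - n := by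
    intro x y
    rw [hvadd]
    split_ifs with h
    · exact Nat.mod_eq_of_lt h
    · rw [Nat.mod_eq_sub_mod (by omega)]
      exact Nat.mod_eq_of_lt (by omega)
  have hfne : ∀ a b : Fin n, a.val ≠ b.val → a ≠ b :=
    fun a b h hab => h (congrArg Fin.val hab)
  have hi1i1 : i1 + i1 = 0 := by
    apply Fin.ext
    rw [hvadd, hi1v, h0v]
    have h2 : m + m = 2*m := by ring
    rw [h2, ← hn, Nat.mod_self]
  -- the Latin square
  set M : Fin n → Fin n → Fin n := fun k i =>
    i + k + (if (i = 0 ∨ i = i1) ∧ (k = 0 ∨ k = i1) then i1 else 0) with hM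
  have hMdef : ∀ k i, M k i
      = i + k + (if (i = 0 ∨ i = i1) ∧ (k = 0 ∨ k = i1) then i1 else 0) := by
    intro k i
    rw [hM]
  have hswap1 : ∀ x : Fin n, (x = 0 ∨ x = i1) → Equiv.swap (0 : Fin n) i1 x = x + i1 := by
    intro x hx
    rcases hx with rfl | rfl
    · rw [Equiv.swap_apply_left, zero_add]
    · rw [Equiv.swap_apply_right, hi1i1]
  have hswap2 : ∀ x : Fin n, ¬(x = 0 ∨ x = i1) → Equiv.swap (0 : Fin n) i1 x = x := by
    intro x hx
    push_neg at hx
    exact Equiv.swap_apply_of_ne_of_ne hx.1 hx.2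
  have hbij : ∀ k, Function.Bijective (M k) := by
    intro k
    have : M k = ⇑(((if k = 0 ∨ k = i1 then Equiv.swap (0:Fin n) i1 else Equiv.refl _)).trans
        (Equiv.addRight k)) := by
      funext i
      simp only [Equiv.trans_apply, Equiv.coe_addRight, hM]
      by_cases hk : k = 0 ∨ k = i1
      · rw [if_pos hk]
        by_cases hi : i = 0 ∨ i = i1
        · rw [if_pos ⟨hi, hk⟩, hswap1 i hi]
          rw [add_right_comm]
        · rw [if_neg (by tauto), hswap2 i hi, add_zero]
      · rw [if_neg (by tauto), if_neg hk, add_zero]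
        rfl
    rw [this]
    exact Equiv.bijective _
  have huniq : ∀ i j, ∃! k, M k i = j := by
    intro i j
    have hfun : (fun k => M k i) = ⇑(((if i = 0 ∨ i = i1 then Equiv.swap (0:Fin n) i1
        else Equiv.refl _)).trans (Equiv.addLeft i)) := by
      funext k
      simp only [Equiv.trans_apply, Equiv.coe_addLeft, hM]
      by_cases hi : i = 0 ∨ i = i1
      · rw [if_pos hi]
        by_cases hk : k = 0 ∨ k = i1
        · rw [if_pos ⟨hi, hk⟩, hswap1 k hk, add_assoc]
        · rw [if_neg (by tauto), hswap2 k hk, add_zero, add_comm]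
      · rw [if_neg (by tauto), if_neg hi, add_zero, Equiv.refl_apply, add_comm]
    have hb : Function.Bijective (fun k => M k i) := by
      rw [hfun]; exact Equiv.bijective _
    exact hb.existsUnique j
  -- character
  set χ : Fin n → ℤ := fun x => (-1)^x.val with hχ
  have hpowmod : ∀ t : ℕ, (-1:ℤ)^(t % 2) = (-1)^t := by
    intro t
    conv_rhs => rw [← Nat.div_add_mod t 2, pow_add, pow_mul, neg_one_sq, one_pow, one_mul]
  have hχadd : ∀ x y : Fin n, χ (x + y) = χ x * χ y := by
    intro x y
    show (-1:ℤ)^(x+y).val = (-1)^x.val * (-1)^y.val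
    rw [hvadd, ← hpowmod ((x.val + y.val) % n), Nat.mod_mod_of_dvd _ ⟨m, hn⟩,
      hpowmod, pow_add]
  have hχ0 : χ 0 = 1 := by
    show (-1:ℤ)^(0:Fin n).val = 1
    rw [h0v, pow_zero]
  have hχpm : ∀ x : Fin n, χ x = 1 ∨ χ x = -1 := by
    intro x
    rcases Nat.even_or_odd x.val with h | h
    · left; exact h.neg_one_pow
    · right; exact h.neg_one_pow
  have hSchi : ∑ j : Fin n, χ j = 0 := by
    have h1 : ∑ j : Fin n, χ j = ∑ t ∈ Finset.range n, (-1:ℤ)^t :=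
      Fin.sum_univ_eq_sum_range (fun t => (-1:ℤ)^t) n
    rw [h1, hn]
    exact sum_alt' m
  rcases Nat.even_or_odd m with hme | hmo
  · -- m even
    set ε : Fin n → ℤ := fun i => if i.val < m then 1 else -1 with hε
    have hεpm : ∀ i : Fin n, ε i = 1 ∨ ε i = -1 := by
      intro i
      by_cases h : i.val < m
      · left; simp [hε, h]
      · right; simp [hε, h]
    have hSeps : ∑ i : Fin n, ε i = 0 := by
      have h1 : ∑ i : Fin n, ε i = ∑ t ∈ Finset.range n, (if t < m then (1:ℤ) else -1) :=
        Fin.sum_univ_eq_sum_range (fun t => if t < m then (1:ℤ) else -1) n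
      rw [h1, Finset.range_eq_Ico,
        ← Finset.sum_Ico_consecutive _ (by omega : 0 ≤ m) (by omega : m ≤ n)]
      have s1 : ∑ t ∈ Finset.Ico 0 m, (if t < m then (1:ℤ) else -1) = m := by
        rw [Finset.sum_congr rfl (fun t ht => ?_), Finset.sum_const, Nat.card_Ico,
          nsmul_eq_mul, mul_one, Nat.sub_zero]
        simp only [Finset.mem_Ico] at ht
        rw [if_pos (by omega)]
      have s2 : ∑ t ∈ Finset.Ico m n, (if t < m then (1:ℤ) else -1) = -((n - m : ℕ) : ℤ) := by
        rw [Finset.sum_congr rfl (fun t ht => ?_), Finset.sum_const, Nat.card_Ico,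
          nsmul_eq_mul, mul_neg_one]
        simp only [Finset.mem_Ico] at ht
        rw [if_neg (by omega)]
      rw [s1, s2]
      omega
    have hSchieps : ∑ i : Fin n, χ i * ε i = 0 := by
      obtain ⟨c, hc⟩ := hme
      have h1 : ∑ i : Fin n, χ i * ε i
          = ∑ t ∈ Finset.range n, (-1:ℤ)^t * (if t < m then 1 else -1) :=
        Fin.sum_univ_eq_sum_range (fun t => (-1:ℤ)^t * (if t < m then 1 else -1)) n
      rw [h1, Finset.range_eq_Ico,
        ← Finset.sum_Ico_consecutive _ (by omega : 0 ≤ m) (by omega : m ≤ n)]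
      have s1 : ∑ t ∈ Finset.Ico 0 m, ((-1:ℤ)^t * (if t < m then 1 else -1))
          = ∑ t ∈ Finset.Ico 0 m, (-1:ℤ)^t := by
        refine Finset.sum_congr rfl (fun t ht => ?_)
        simp only [Finset.mem_Ico] at ht
        rw [if_pos (by omega), mul_one]
      have s2 : ∑ t ∈ Finset.Ico m n, ((-1:ℤ)^t * (if t < m then 1 else -1))
          = -∑ t ∈ Finset.Ico m n, (-1:ℤ)^t := by
        rw [← Finset.sum_neg_distrib]
        refine Finset.sum_congr rfl (fun t ht => ?_)
        simp only [Finset.mem_Ico] at ht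
        rw [if_neg (by omega)]
        ring
      rw [s1, s2]
      have z1 : ∑ t ∈ Finset.Ico 0 m, (-1:ℤ)^t = 0 := by
        have := sum_alt_Ico' 0 c
        rwa [zero_add, show 2*c = m by omega] at this
      have z2 : ∑ t ∈ Finset.Ico m n, (-1:ℤ)^t = 0 := by
        have := sum_alt_Ico' m c
        rwa [show m + 2*c = n by omega] at this
      rw [z1, z2]
      ring
    have hχM : ∀ k i, χ (M k i) = χ i * χ k := by
      intro k i
      show χ (i + k + _) = χ i * χ k
      rw [hχadd, hχadd]
      have : χ (if (i = 0 ∨ i = i1) ∧ (k = 0 ∨ k = i1) then i1 else 0) = 1 := by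
        split_ifs
        · show (-1:ℤ)^i1.val = 1
          rw [hi1v]
          exact hme.neg_one_pow
        · exact hχ0
      rw [this, mul_one]
    refine ⟨M, fun p => χ p.2 * ε p.1, hbij, huniq, ?_, ?_, ?_, ?_⟩
    · intro p
      show χ p.2 * ε p.1 = 1 ∨ χ p.2 * ε p.1 = -1
      rcases hχpm p.2 with h1 | h1 <;> rcases hεpm p.1 with h2 | h2 <;>
        rw [h1, h2] <;> norm_num
    · intro i
      simp only
      rw [← Finset.sum_mul, hSchi, zero_mul]
    · intro j
      simp only
      rw [← Finset.mul_sum, hSeps, mul_zero]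
    · intro k
      simp only
      calc ∑ i : Fin n, χ (M k i) * ε i = ∑ i : Fin n, (χ i * ε i) * χ k := by
            refine Finset.sum_congr rfl (fun i _ => ?_)
            rw [hχM]; ring
        _ = (∑ i : Fin n, χ i * ε i) * χ k := by rw [← Finset.sum_mul]
        _ = 0 := by rw [hSchieps, zero_mul]
  · -- m odd
    have hm3 : 3 ≤ m := by
      rcases hmo with ⟨c, hc⟩; omega
    obtain ⟨c, hc⟩ := hmo
    set ε' : Fin n → ℤ := fun i => if i.val ≤ m then 1 else -1 with hεp
    set σ : Fin n → Fin n → ℤ := fun i j =>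
      if i.val < m ∧ (j.val = 2*i.val ∨ j.val = 2*i.val+1) then -1 else 1 with hσ
    set F : Fin n × Fin n → ℤ := fun p => χ p.2 * ε' p.1 * σ p.1 p.2 with hF
    have hεppm : ∀ i : Fin n, ε' i = 1 ∨ ε' i = -1 := by
      intro i
      by_cases h : i.val ≤ m
      · left; simp [hεp, h]
      · right; simp [hεp, h]
    have hσpm : ∀ i j : Fin n, σ i j = 1 ∨ σ i j = -1 := by
      intro i j
      by_cases h : i.val < m ∧ (j.val = 2*i.val ∨ j.val = 2*i.val+1)
      · right; simp [hσ, h]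
      · left; simp [hσ, h]
    have hSeps' : ∑ i : Fin n, ε' i = 2 := by
      have h1 : ∑ i : Fin n, ε' i = ∑ t ∈ Finset.range n, (if t ≤ m then (1:ℤ) else -1) :=
        Fin.sum_univ_eq_sum_range (fun t => if t ≤ m then (1:ℤ) else -1) n
      rw [h1, Finset.range_eq_Ico,
        ← Finset.sum_Ico_consecutive _ (by omega : 0 ≤ m+1) (by omega : m+1 ≤ n)]
      have s1 : ∑ t ∈ Finset.Ico 0 (m+1), (if t ≤ m then (1:ℤ) else -1) = (m+1 : ℕ) := by
        rw [Finset.sum_congr rfl (fun t ht => ?_), Finset.sum_const, Nat.card_Ico,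
          nsmul_eq_mul, mul_one, Nat.sub_zero]
        simp only [Finset.mem_Ico] at ht
        rw [if_pos (by omega)]
      have s2 : ∑ t ∈ Finset.Ico (m+1) n, (if t ≤ m then (1:ℤ) else -1)
          = -((n - (m+1) : ℕ) : ℤ) := by
        rw [Finset.sum_congr rfl (fun t ht => ?_), Finset.sum_const, Nat.card_Ico,
          nsmul_eq_mul, mul_neg_one]
        simp only [Finset.mem_Ico] at ht
        rw [if_neg (by omega)]
      rw [s1, s2]
      omega
    have hSchieps' : ∑ i : Fin n, χ i * ε' i = 0 := by
      have h1 : ∑ i : Fin n, χ i * ε' i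
          = ∑ t ∈ Finset.range n, (-1:ℤ)^t * (if t ≤ m then 1 else -1) :=
        Fin.sum_univ_eq_sum_range (fun t => (-1:ℤ)^t * (if t ≤ m then 1 else -1)) n
      rw [h1, Finset.range_eq_Ico,
        ← Finset.sum_Ico_consecutive _ (by omega : 0 ≤ m+1) (by omega : m+1 ≤ n)]
      have s1 : ∑ t ∈ Finset.Ico 0 (m+1), ((-1:ℤ)^t * (if t ≤ m then 1 else -1))
          = ∑ t ∈ Finset.Ico 0 (m+1), (-1:ℤ)^t := by
        refine Finset.sum_congr rfl (fun t ht => ?_)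
        simp only [Finset.mem_Ico] at ht
        rw [if_pos (by omega), mul_one]
      have s2 : ∑ t ∈ Finset.Ico (m+1) n, ((-1:ℤ)^t * (if t ≤ m then 1 else -1))
          = -∑ t ∈ Finset.Ico (m+1) n, (-1:ℤ)^t := by
        rw [← Finset.sum_neg_distrib]
        refine Finset.sum_congr rfl (fun t ht => ?_)
        simp only [Finset.mem_Ico] at ht
        rw [if_neg (by omega)]
        ring
      rw [s1, s2]
      have z1 : ∑ t ∈ Finset.Ico 0 (m+1), (-1:ℤ)^t = 0 := by
        have := sum_alt_Ico' 0 (c+1)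
        rwa [zero_add, show 2*(c+1) = m+1 by omega] at this
      have z2 : ∑ t ∈ Finset.Ico (m+1) n, (-1:ℤ)^t = 0 := by
        have := sum_alt_Ico' (m+1) c
        rwa [show m+1 + 2*c = n by omega] at this
      rw [z1, z2]
      ring
    -- sigma vanishing lemma
    have hsig : ∀ i k : Fin n, (i.val < m → ¬(k.val = i.val ∨ k.val = i.val + 1)) →
        σ i (i + k) = 1 := by
      intro i k h
      refine if_neg ?_
      rintro ⟨hil, hor⟩
      refine h hil ?_
      have hb1 := i.isLt
      have hb2 := k.isLt
      rw [hvadd2] at hor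
      by_cases hw : i.val + k.val < n
      · rw [if_pos hw] at hor; omega
      · rw [if_neg hw] at hor; omega
    have hval : ∀ p : Fin n × Fin n, F p = 1 ∨ F p = -1 := by
      intro p
      rw [hF]
      simp only
      rcases hχpm p.2 with h1 | h1 <;> rcases hεppm p.1 with h2 | h2 <;>
        rcases hσpm p.1 p.2 with h3 | h3 <;> rw [h1, h2, h3] <;> norm_num
    refine ⟨M, F, hbij, huniq, hval, ?_, ?_, ?_⟩
    · -- rows
      intro i
      have hrw : ∑ j : Fin n, F (i, j) = ∑ j : Fin n, χ j * ε' i * σ i j :=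
        Finset.sum_congr rfl (fun j _ => rfl)
      rw [hrw]
      by_cases him : i.val < m
      · have hj0lt : 2*i.val < n := by omega
        have hj1lt : 2*i.val+1 < n := by omega
        set j0 : Fin n := ⟨2*i.val, hj0lt⟩ with hj0
        set j1 : Fin n := ⟨2*i.val+1, hj1lt⟩ with hj1
        have hsplit : ∑ j : Fin n, χ j * ε' i * σ i j
            = (∑ j : Fin n, χ j * ε' i) + ∑ j : Fin n, (χ j * ε' i * (σ i j - 1)) := by
          rw [← Finset.sum_add_distrib]
          exact Finset.sum_congr rfl (fun j _ => by ring)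
        rw [hsplit]
        have h1 : ∑ j : Fin n, χ j * ε' i = 0 := by
          rw [← Finset.sum_mul, hSchi, zero_mul]
        have h2 : ∑ j : Fin n, (χ j * ε' i * (σ i j - 1))
            = ∑ j ∈ ({j0, j1} : Finset (Fin n)), (χ j * ε' i * (σ i j - 1)) := by
          refine (Finset.sum_subset (Finset.subset_univ _) (fun j _ hj => ?_)).symm
          have hσ1 : σ i j = 1 := by
            refine if_neg ?_
            rintro ⟨_, hor⟩
            simp only [Finset.mem_insert, Finset.mem_singleton] at hj
            push_neg at hj
            rcases hor with h | h
            · exact hj.1 (Fin.ext (by rw [h]))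
            · exact hj.2 (Fin.ext (by rw [h]))
          rw [hσ1]
          ring
        rw [h2, Finset.sum_pair (hfne j0 j1 (by show 2*i.val ≠ 2*i.val+1; omega))]
        have hσ0 : σ i j0 = -1 := if_pos ⟨him, Or.inl rfl⟩
        have hσ1 : σ i j1 = -1 := if_pos ⟨him, Or.inr rfl⟩
        have hχ0' : χ j0 = 1 := by
          show (-1:ℤ)^(2*i.val) = 1
          exact Even.neg_one_pow ⟨i.val, by ring⟩
        have hχ1' : χ j1 = -1 := by
          show (-1:ℤ)^(2*i.val+1) = -1
          exact Odd.neg_one_pow ⟨i.val, by ring⟩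
        rw [hσ0, hσ1, hχ0', hχ1', h1]
        ring
      · have hone : ∀ j : Fin n, σ i j = 1 := by
          intro j
          rw [hσ]; simp only; rw [if_neg (by tauto)]
        have : ∑ j : Fin n, χ j * ε' i * σ i j = (∑ j : Fin n, χ j) * ε' i := by
          rw [Finset.sum_mul]
          exact Finset.sum_congr rfl (fun j _ => by rw [hone j]; ring)
        rw [this, hSchi, zero_mul]
    · -- columns
      intro j
      have hrw : ∑ i : Fin n, F (i, j) = ∑ i : Fin n, χ j * ε' i * σ i j :=
        Finset.sum_congr rfl (fun i _ => rfl)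
      rw [hrw]
      have hi0lt : j.val / 2 < n := by omega
      set i0 : Fin n := ⟨j.val / 2, hi0lt⟩ with hi0
      have hi0m : i0.val < m := by
        show j.val / 2 < m
        have := j.isLt
        omega
      have hsplit : ∑ i : Fin n, χ j * ε' i * σ i j
          = χ j * ((∑ i : Fin n, ε' i) + ∑ i : Fin n, (ε' i * (σ i j - 1))) := by
        rw [← Finset.sum_add_distrib, Finset.mul_sum]
        refine Finset.sum_congr rfl (fun i _ => by ring)
      rw [hsplit]
      have h2 : ∑ i : Fin n, (ε' i * (σ i j - 1))
          = ∑ i ∈ ({i0} : Finset (Fin n)), (ε' i * (σ i j - 1)) := by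
        refine (Finset.sum_subset (Finset.subset_univ _) (fun i _ hi => ?_)).symm
        have hσ1 : σ i j = 1 := by
          refine if_neg ?_
          rintro ⟨_, hor⟩
          simp only [Finset.mem_singleton] at hi
          exact hi (Fin.ext (by show i.val = j.val / 2; omega))
        rw [hσ1]
        ring
      rw [h2, Finset.sum_singleton]
      have hσi0 : σ i0 j = -1 :=
        if_pos ⟨hi0m, by
          show j.val = 2*(j.val/2) ∨ j.val = 2*(j.val/2)+1
          omega⟩
      have hεi0 : ε' i0 = 1 := if_pos (le_of_lt hi0m)
      rw [hσi0, hεi0, hSeps']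
      ring
    · -- lines
      intro k
      have main : ∀ (S : Finset (Fin n)),
          (∀ i, i ∉ S → F (i, M k i) = χ i * ε' i * χ k) →
          (∑ i ∈ S, (F (i, M k i) - χ i * ε' i * χ k)) = 0 →
          ∑ i : Fin n, F (i, M k i) = 0 := by
        intro S hv hS
        have h1 : ∑ i : Fin n, F (i, M k i)
            = ∑ i : Fin n, (χ i * ε' i * χ k + (F (i, M k i) - χ i * ε' i * χ k)) :=
          Finset.sum_congr rfl (fun i _ => by ring)
        rw [h1, Finset.sum_add_distrib]
        have h2 : ∑ i : Fin n, (F (i, M k i) - χ i * ε' i * χ k)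
            = ∑ i ∈ S, (F (i, M k i) - χ i * ε' i * χ k) := by
          refine (Finset.sum_subset (Finset.subset_univ _) (fun i _ hi => ?_)).symm
          rw [hv i hi]
          ring
        rw [h2, hS]
        have h3 : ∑ i : Fin n, χ i * ε' i * χ k = (∑ i : Fin n, χ i * ε' i) * χ k := by
          rw [Finset.sum_mul]
        rw [h3, hSchieps', zero_mul, add_zero]
      have hFeq : ∀ i j : Fin n, F (i, j) = χ j * ε' i * σ i j := fun i j => rfl
      by_cases hk0 : k = 0
      · subst hk0
        refine main ({0, i1} : Finset (Fin n)) (fun i hi => ?_) ?_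
        · simp only [Finset.mem_insert, Finset.mem_singleton] at hi
          push_neg at hi
          have hMi : M 0 i = i + 0 := by
            rw [hMdef, if_neg (by tauto), add_zero]
          rw [hMi, hFeq, hχadd, hsig i 0 (fun him => by
            rw [h0v]
            have : i.val ≠ 0 := fun h => hi.1 (Fin.ext (by rw [h, h0v]))
            omega)]
          rw [hχ0]
          ring
        · have hne01 : (0 : Fin n) ≠ i1 := hfne _ _ (by rw [h0v, hi1v]; omega)
          rw [Finset.sum_pair hne01]
          have hM00 : M 0 0 = i1 := by
            rw [hMdef, if_pos ⟨Or.inl rfl, Or.inl rfl⟩, zero_add, zero_add]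
          have hM0i1 : M 0 i1 = 0 := by
            rw [hMdef, if_pos ⟨Or.inr rfl, Or.inl rfl⟩, add_zero, hi1i1]
          have t1 : F (0, M 0 0) - χ 0 * ε' 0 * χ 0 = -2 := by
            rw [hM00, hFeq]
            have hχi1 : χ i1 = -1 := by
              show (-1:ℤ)^(i1.val) = -1
              rw [hi1v]
              exact Odd.neg_one_pow ⟨c, by omega⟩
            have hσ0i1 : σ 0 i1 = 1 := by
              refine if_neg ?_
              rintro ⟨_, hor⟩
              rw [hi1v, h0v] at hor
              omega
            have hε0 : ε' 0 = 1 := if_pos (by rw [h0v]; omega)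
            rw [hχi1, hσ0i1, hε0, hχ0]
            ring
          have t2 : F (i1, M 0 i1) - χ i1 * ε' i1 * χ 0 = 2 := by
            rw [hM0i1, hFeq]
            have hχi1 : χ i1 = -1 := by
              show (-1:ℤ)^(i1.val) = -1
              rw [hi1v]
              exact Odd.neg_one_pow ⟨c, by omega⟩
            have hσi10 : σ i1 0 = 1 := by
              refine if_neg ?_
              rintro ⟨hlt, _⟩
              rw [hi1v] at hlt
              omega
            have hεi1 : ε' i1 = 1 := if_pos (le_of_eq hi1v)
            rw [hχi1, hσi10, hεi1, hχ0]
            ring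
          rw [t1, t2]
          ring
      · by_cases hk1 : k = i1
        · subst hk1
          set im1 : Fin n := ⟨m - 1, by omega⟩ with him1
          have him1v : im1.val = m - 1 := rfl
          have hne1 : (0 : Fin n) ∉ ({i1, im1} : Finset (Fin n)) := by
            simp only [Finset.mem_insert, Finset.mem_singleton]
            push_neg
            exact ⟨hfne _ _ (by rw [h0v, hi1v]; omega),
              hfne _ _ (by rw [h0v, him1v]; omega)⟩
          have hne2 : i1 ≠ im1 := hfne _ _ (by rw [hi1v, him1v]; omega)
          refine main ({0, i1, im1} : Finset (Fin n)) (fun i hi => ?_) ?_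
          · simp only [Finset.mem_insert, Finset.mem_singleton] at hi
            push_neg at hi
            have hMi : M i1 i = i + i1 := by
              rw [hMdef, if_neg (by tauto), add_zero]
            rw [hMi, hFeq, hχadd, hsig i i1 (fun him => by
              rw [hi1v]
              have h1 : i.val ≠ m - 1 := fun h => hi.2.2 (Fin.ext (by rw [h, him1v]))
              omega)]
            ring
          · rw [Finset.sum_insert hne1, Finset.sum_pair hne2]
            have hχi1 : χ i1 = -1 := by
              show (-1:ℤ)^(i1.val) = -1
              rw [hi1v]
              exact Odd.neg_one_pow ⟨c, by omega⟩
            have hM0' : M i1 0 = 0 := by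
              rw [hMdef, if_pos ⟨Or.inl rfl, Or.inr rfl⟩, zero_add, hi1i1]
            have hMi1 : M i1 i1 = i1 := by
              rw [hMdef, if_pos ⟨Or.inr rfl, Or.inr rfl⟩, hi1i1, zero_add]
            have hMim1 : M i1 im1 = im1 + i1 := by
              rw [hMdef]
              rw [if_neg (by
                rintro ⟨h | h, -⟩
                · exact hfne im1 0 (by rw [him1v, h0v]; omega) h
                · exact hfne im1 i1 (by rw [him1v, hi1v]; omega) h), add_zero]
            have hvim : (im1 + i1).val = 2*m - 1 := by
              rw [hvadd2, him1v, hi1v, if_pos (by omega)]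
              omega
            have t0 : F (0, M i1 0) - χ 0 * ε' 0 * χ i1 = 0 := by
              rw [hM0', hFeq]
              have hσ00 : σ 0 0 = -1 :=
                if_pos ⟨by rw [h0v]; omega, Or.inl (by rw [h0v])⟩
              have hε0 : ε' 0 = 1 := if_pos (by rw [h0v]; omega)
              rw [hσ00, hε0, hχ0, hχi1]
              ring
            have t1 : F (i1, M i1 i1) - χ i1 * ε' i1 * χ i1 = -2 := by
              rw [hMi1, hFeq]
              have hσi1i1 : σ i1 i1 = 1 := by
                refine if_neg ?_
                rintro ⟨hlt, _⟩
                rw [hi1v] at hlt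
                omega
              have hεi1 : ε' i1 = 1 := if_pos (le_of_eq hi1v)
              rw [hσi1i1, hεi1, hχi1]
              ring
            have t2 : F (im1, M i1 im1) - χ im1 * ε' im1 * χ i1 = 2 := by
              rw [hMim1, hFeq, hχadd]
              have hχim1 : χ im1 = 1 := by
                show (-1:ℤ)^(im1.val) = 1
                rw [him1v]
                exact Even.neg_one_pow ⟨c, by omega⟩
              have hσv : σ im1 (im1 + i1) = -1 :=
                if_pos ⟨by rw [him1v]; omega,
                  Or.inr (by rw [hvim, him1v]; omega)⟩
              have hεim1 : ε' im1 = 1 := if_pos (by rw [him1v]; omega)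
              rw [hχim1, hσv, hεim1, hχi1]
              ring
            rw [t0, t1, t2]
            ring
        · -- k not 0, not i1
          have hMk : ∀ i, M k i = i + k := by
            intro i
            rw [hMdef, if_neg (by tauto), add_zero]
          by_cases hkm : k.val < m
          · have hk1' : 1 ≤ k.val := by
              by_contra h
              exact hk0 (Fin.ext (by rw [h0v]; omega))
            set km1 : Fin n := ⟨k.val - 1, by omega⟩ with hkm1
            have hkm1v : km1.val = k.val - 1 := rfl
            have hnekk : k ≠ km1 := hfne _ _ (by rw [hkm1v]; omega)
            refine main ({k, km1} : Finset (Fin n)) (fun i hi => ?_) ?_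
            · simp only [Finset.mem_insert, Finset.mem_singleton] at hi
              push_neg at hi
              rw [hMk, hFeq, hχadd, hsig i k (fun him => by
                have h1 : k.val ≠ i.val := fun h => hi.1 (Fin.ext h.symm)
                have h2 : i.val ≠ k.val - 1 := fun h => hi.2 (Fin.ext (by rw [h, hkm1v]))
                omega)]
              ring
            · rw [Finset.sum_pair hnekk]
              have hvkk : (k + k).val = 2*k.val := by
                rw [hvadd2, if_pos (by omega)]
                ring
              have hvkm : (km1 + k).val = 2*k.val - 1 := by
                rw [hvadd2, hkm1v, if_pos (by omega)]
                omega
              have t1 : F (k, M k k) - χ k * ε' k * χ k = -2 := by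
                rw [hMk, hFeq, hχadd]
                have hσv : σ k (k + k) = -1 :=
                  if_pos ⟨hkm, Or.inl (by rw [hvkk])⟩
                have hεk : ε' k = 1 := if_pos (by omega)
                rw [hσv, hεk]
                rcases hχpm k with h | h <;> rw [h] <;> ring
              have t2 : F (km1, M k km1) - χ km1 * ε' km1 * χ k = 2 := by
                rw [hMk, hFeq, hχadd]
                have hσv : σ km1 (km1 + k) = -1 :=
                  if_pos ⟨by rw [hkm1v]; omega, Or.inr (by rw [hvkm, hkm1v]; omega)⟩
                have hεkm1 : ε' km1 = 1 := if_pos (by rw [hkm1v]; omega)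
                have hprod : χ km1 * χ k = -1 := by
                  show (-1:ℤ)^(km1.val) * (-1)^(k.val) = -1
                  rw [← pow_add, hkm1v]
                  exact Odd.neg_one_pow ⟨k.val - 1, by omega⟩
                rw [hσv, hεkm1]
                calc χ km1 * χ k * 1 * -1 - χ km1 * 1 * χ k = -2*(χ km1 * χ k) := by ring
                  _ = 2 := by rw [hprod]; ring
              rw [t1, t2]
              ring
          · -- k.val > m
            have hkm' : m + 1 ≤ k.val := by
              have : k.val ≠ m := fun h => hk1 (Fin.ext (by rw [h, hi1v]))
              omega
            refine main (∅ : Finset (Fin n)) (fun i _ => ?_) (by simp)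
            rw [hMk, hFeq, hχadd, hsig i k (fun him => by omega)]
            ring

end EvenCase

/-- for n ≥ 3, K_{n,n} has a 3-null 1-factorization (a 1-factorization and
a zero-sum 3-flow with each 1-factor of weight zero); for even n ≠ 6 one may use only ±1.
The matchings are encoded by M : each M k is a bijection Fin n → Fin n, and each edge
(i,j) lies in exactly one matching. -/
theorem knn_null_one_factorization (n : ℕ) (hn : 3 ≤ n) :
    (∃ (M : Fin n → Fin n → Fin n) (f : Fin n × Fin n → ℤ),
      (∀ k, Function.Bijective (M k)) ∧
      (∀ i j, ∃! k, M k i = j) ∧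
      (∀ p, f p = 1 ∨ f p = -1 ∨ f p = 2 ∨ f p = -2) ∧
      (∀ i, ∑ j, f (i, j) = 0) ∧
      (∀ j, ∑ i, f (i, j) = 0) ∧
      (∀ k, ∑ i, f (i, M k i) = 0)) ∧
    (Even n → n ≠ 6 →
      ∃ (M : Fin n → Fin n → Fin n) (f : Fin n × Fin n → ℤ),
      (∀ k, Function.Bijective (M k)) ∧
      (∀ i j, ∃! k, M k i = j) ∧
      (∀ p, f p = 1 ∨ f p = -1) ∧
      (∀ i, ∑ j, f (i, j) = 0) ∧
      (∀ j, ∑ i, f (i, j) = 0) ∧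
      (∀ k, ∑ i, f (i, M k i) = 0)) := by
  constructor
  · rcases Nat.even_or_odd n with he | ho
    · obtain ⟨c, hc⟩ := he
      have h : n = 2*c := by omega
      subst h
      obtain ⟨M, f, h1, h2, h3, h4, h5, h6⟩ := even_case c (by omega)
      exact ⟨M, f, h1, h2, fun p => (h3 p).elim Or.inl (fun h => Or.inr (Or.inl h)), h4, h5, h6⟩
    · exact odd_case n hn ho
  · intro he _
    obtain ⟨c, hc⟩ := he
    have h : n = 2*c := by omega
    subst h
    exact even_case c (by omega)
end
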